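/- arXiv:math/0301027 — 3 statements merged into one kernel-verified Lean document; each statement's English description precedes it below -/
import Mathlib

section
/- Let C be a finite tensor category over an algebraically closed field k. If P is a projective object of C, then its right dual P* (and likewise its left dual *P) is projective. Consequently, every projective object of C is injective and every injective object is projective, and every indecomposable projective object has a unique simple subobject (its socle). -/
open CategoryTheory MonoidalCategory

universe u v w

/-- A *finite tensor category* over an algebraically closed field `k`. -/
class FiniteTensorCategory (k : Type u) (C : Type v) [Field k]
    [Category.{w} C] [Abelian C] [CategoryTheory.Linear k C] [MonoidalCategory C]
    [MonoidalPreadditive C] [MonoidalLinear k C] [RigidCategory C] : Prop where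
  homFinite : ∀ X Y : C, FiniteDimensional k (X ⟶ Y)
  finiteLength : ∀ X : C, WellFoundedGT (Subobject X) ∧ WellFoundedLT (Subobject X)
  simpleUnit : Simple (𝟙_ C)
  finitelyManySimples : ∃ (ι : Type) (_ : Finite ι) (L : ι → C),
      (∀ i, Simple (L i)) ∧ ∀ X : C, Simple X → ∃ i, Nonempty (X ≅ L i)
  projectiveCovers : ∀ X : C, Simple X →
      ∃ (P : C) (f : P ⟶ X), Projective P ∧ Epi f ∧
        ∀ (R : C) (g : R ⟶ P), Epi (g ≫ f) → Epi g

/-- An object of an abelian category is indecomposable if it is nonzero and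
is not the biproduct of two nonzero objects. -/
def IsIndecomposable {C : Type v} [Category.{w} C] [Abelian C] (Q : C) : Prop :=
  ¬ Limits.IsZero Q ∧ ∀ (A B : C), (Q ≅ A ⊞ B) → Limits.IsZero A ∨ Limits.IsZero B

set_option linter.unusedSectionVars false

namespace FTCAux

open CategoryTheory.ExactPairing CategoryTheory.Limits

section Ring

/-- In a finite-dimensional algebra with no nontrivial idempotents, every element is
invertible or nilpotent. -/
theorem isUnit_or_isNilpotent_of_idem {k : Type u} {A : Type*} [Field k] [Ring A]
    [Algebra k A] [FiniteDimensional k A]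
    (hidem : ∀ e : A, e * e = e → e = 0 ∨ e = 1) (a : A) :
    IsUnit a ∨ IsNilpotent a := by
  classical
  have hint : IsIntegral k a := IsIntegral.of_finite k a
  set p := minpoly k a with hp
  have hpne : p ≠ 0 := minpoly.ne_zero hint
  obtain ⟨n, q, hqnd, hfac⟩ := WfDvdMonoid.max_power_factor hpne Polynomial.irreducible_X
  -- unit construction from a polynomial with nonzero constant term killed by `a`
  have key : ∀ r : Polynomial k, Polynomial.aeval a r = 0 → r.coeff 0 ≠ 0 → IsUnit a := by
    intro r hr hc
    obtain ⟨s, hs⟩ : Polynomial.X ∣ (r - Polynomial.C (r.coeff 0)) := by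
      rw [Polynomial.X_dvd_iff]; simp
    set b : A := -((r.coeff 0)⁻¹ • Polynomial.aeval a s) with hb
    have hmul : a * Polynomial.aeval a s = - algebraMap k A (r.coeff 0) := by
      have : Polynomial.aeval a (r - Polynomial.C (r.coeff 0)) =
          - algebraMap k A (r.coeff 0) := by
        simp [hr]
      rw [hs] at this
      simpa using this
    have hmul' : Polynomial.aeval a s * a = - algebraMap k A (r.coeff 0) := by
      rw [← hmul]
      have : Polynomial.aeval a (Polynomial.X * s) = Polynomial.aeval a (s * Polynomial.X) := by
        rw [mul_comm]
      simpa using this.symm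
    have hab : a * b = 1 := by
      rw [hb, mul_neg, Algebra.mul_smul_comm, hmul, smul_neg, neg_neg,
        Algebra.smul_def, ← map_mul, inv_mul_cancel₀ hc, map_one]
    have hba : b * a = 1 := by
      rw [hb, neg_mul, Algebra.smul_mul_assoc, hmul', smul_neg, neg_neg,
        Algebra.smul_def, ← map_mul, inv_mul_cancel₀ hc, map_one]
    exact ⟨⟨a, b, hab, hba⟩, rfl⟩
  rcases Nat.eq_zero_or_pos n with hn | hn
  · left
    have hpq : p = q := by rw [hfac, hn, pow_zero, one_mul]
    apply key p (minpoly.aeval k a)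
    rw [hpq]
    exact fun h => hqnd (Polynomial.X_dvd_iff.mpr h)
  · -- coprimality of X^n and q
    have hc0 : q.coeff 0 ≠ 0 := fun h => hqnd (Polynomial.X_dvd_iff.mpr h)
    obtain ⟨s, hs⟩ : Polynomial.X ∣ (q - Polynomial.C (q.coeff 0)) := by
      rw [Polynomial.X_dvd_iff]; simp
    have hcop : IsCoprime (Polynomial.X ^ n) q := by
      apply IsCoprime.pow_left
      refine ⟨-(Polynomial.C (q.coeff 0)⁻¹) * s, Polynomial.C (q.coeff 0)⁻¹, ?_⟩
      have : Polynomial.C (q.coeff 0)⁻¹ * (q - Polynomial.X * s) = 1 := by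
        rw [← hs]
        simp [← Polynomial.C_mul, inv_mul_cancel₀ hc0]
      calc -(Polynomial.C (q.coeff 0)⁻¹) * s * Polynomial.X + Polynomial.C (q.coeff 0)⁻¹ * q
          = Polynomial.C (q.coeff 0)⁻¹ * (q - Polynomial.X * s) := by ring
        _ = 1 := this
    obtain ⟨uu, vv, huv⟩ := hcop
    have haevalp : Polynomial.aeval a p = 0 := minpoly.aeval k a
    have hee : Polynomial.aeval a (vv * q) * Polynomial.aeval a (vv * q)
        = Polynomial.aeval a (vv * q) := by
      rw [← map_mul]
      have h1 : vv * q * (vv * q) - vv * q = - (vv * q * (uu * Polynomial.X ^ n)) := by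
        have huX : uu * Polynomial.X ^ n = 1 - vv * q := by linear_combination huv
        rw [huX]; ring
      have h2 : Polynomial.aeval a (vv * q * (uu * Polynomial.X ^ n)) = 0 := by
        have hre : vv * q * (uu * Polynomial.X ^ n) = (vv * uu) * p := by rw [hfac]; ring
        rw [hre, map_mul, haevalp, mul_zero]
      have h3 := congrArg (Polynomial.aeval a) h1
      rw [map_sub, map_neg, h2, neg_zero, sub_eq_zero] at h3
      exact h3
    rcases hidem _ hee with h0 | h1
    · exfalso
      have hdvd : p ∣ vv * q := minpoly.dvd k a h0
      rw [hfac] at hdvd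
      have hqz : q ≠ 0 := fun h => hqnd (h ▸ dvd_zero _)
      have hdvd' : Polynomial.X ^ n ∣ vv := by
        have : Polynomial.X ^ n * q ∣ vv * q := hdvd
        exact (mul_dvd_mul_iff_right hqz).mp this
      have hX1 : (Polynomial.X : Polynomial k) ∣ 1 := by
        rw [← huv]
        apply dvd_add
        · exact Dvd.dvd.mul_left (dvd_pow_self _ hn.ne') uu
        · exact Dvd.dvd.mul_right ((dvd_pow_self (Polynomial.X : Polynomial k) hn.ne').trans hdvd') q
      exact Polynomial.not_isUnit_X (isUnit_of_dvd_one hX1)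
    · right
      -- aeval (uu * X^n) = 0
      have h0 : Polynomial.aeval a (uu * Polynomial.X ^ n) = 0 := by
        have huX : uu * Polynomial.X ^ n = 1 - vv * q := by linear_combination huv
        rw [huX, map_sub, map_one, h1, sub_self]
      have hdvd : p ∣ uu * Polynomial.X ^ n := minpoly.dvd k a h0
      rw [hfac] at hdvd
      have hXn : (Polynomial.X : Polynomial k) ^ n ≠ 0 := pow_ne_zero _ Polynomial.X_ne_zero
      have hqu : q ∣ uu := by
        have hdvd2 : Polynomial.X ^ n * q ∣ Polynomial.X ^ n * uu := by
          rwa [mul_comm uu (Polynomial.X ^ n)] at hdvd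
        exact (mul_dvd_mul_iff_left hXn).mp hdvd2
      obtain ⟨w, hw⟩ := hqu
      have hqunit : IsUnit q := by
        apply IsUnit.of_mul_eq_one (w * Polynomial.X ^ n + vv)
        calc q * (w * Polynomial.X ^ n + vv) = (q * w) * Polynomial.X ^ n + vv * q := by ring
          _ = uu * Polynomial.X ^ n + vv * q := by rw [← hw]
          _ = 1 := huv
      have hqa : IsUnit (Polynomial.aeval a q) := hqunit.map (Polynomial.aeval a)
      refine ⟨n, ?_⟩
      have : a ^ n * Polynomial.aeval a q = 0 := by
        have := haevalp
        rw [hfac, map_mul, map_pow, Polynomial.aeval_X] at this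
        exact this
      exact (hqa.mul_left_eq_zero).mp this

end Ring

section Monoidal

variable {C : Type v} [Category.{w} C] [Abelian C] [MonoidalCategory C]
  [MonoidalPreadditive C] [RigidCategory C]

theorem tensorLeft_pres_epi (Z : C) : (tensorLeft Z).PreservesEpimorphisms :=
  Functor.preservesEpimorphisms_of_adjunction (tensorLeftAdjunction (ᘁZ : C) Z)

theorem tensorRight_pres_epi (Z : C) : (tensorRight Z).PreservesEpimorphisms :=
  Functor.preservesEpimorphisms_of_adjunction (tensorRightAdjunction Z (Zᘁ))

theorem tensorLeft_pres_mono (Z : C) : (tensorLeft Z).PreservesMonomorphisms :=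
  Functor.preservesMonomorphisms_of_adjunction (tensorLeftAdjunction Z (Zᘁ))

theorem tensorRight_pres_mono (Z : C) : (tensorRight Z).PreservesMonomorphisms :=
  Functor.preservesMonomorphisms_of_adjunction (tensorRightAdjunction (ᘁZ : C) Z)

theorem projective_whiskerLeft (X P : C) (hP : Projective P) : Projective (X ⊗ P) := by
  haveI := tensorLeft_pres_epi (C := C) (ᘁX : C)
  exact (tensorLeftAdjunction (ᘁX : C) X).map_projective P hP

theorem projective_whiskerRight (P X : C) (hP : Projective P) : Projective (P ⊗ X) := by
  haveI := tensorRight_pres_epi (C := C) (Xᘁ)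
  exact (tensorRightAdjunction X (Xᘁ)).map_projective P hP

theorem projective_of_retract {P R : C} (s : P ⟶ R) (r : R ⟶ P) (h : s ≫ r = 𝟙 P)
    (hR : Projective R) : Projective P where
  factors {E X} f e he := by
    obtain ⟨g, hg⟩ := hR.factors (r ≫ f) e
    exact ⟨s ≫ g, by rw [Category.assoc, hg, ← Category.assoc, h, Category.id_comp]⟩

theorem rightDual_projective {Q₀ : C} (f : Q₀ ⟶ 𝟙_ C) (hQ₀ : Projective Q₀) [Epi f]
    (P : C) [HasRightDual P] (hP : Projective P) : Projective ((Pᘁ : C)) := by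
  haveI : Projective ((Pᘁ : C) ⊗ P) := projective_whiskerLeft (Pᘁ) P hP
  have htf : Projective.factorThru (ε_ P (Pᘁ)) f ≫ f = ε_ P (Pᘁ) :=
    Projective.factorThru_comp _ _
  set t : (Pᘁ : C) ⊗ P ⟶ Q₀ := Projective.factorThru (ε_ P (Pᘁ)) f with ht
  refine projective_of_retract
    ((ρ_ (Pᘁ : C)).inv ≫ (Pᘁ : C) ◁ η_ P (Pᘁ) ≫ (α_ _ _ _).inv ≫ t ▷ (Pᘁ : C))
    (f ▷ (Pᘁ : C) ≫ (λ_ _).hom) ?_ (projective_whiskerRight Q₀ (Pᘁ) hQ₀)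
  slice_lhs 4 5 => rw [← comp_whiskerRight, htf]
  slice_lhs 2 4 => rw [coevaluation_evaluation]
  simp

theorem leftDual_projective {Q₀ : C} (f : Q₀ ⟶ 𝟙_ C) (hQ₀ : Projective Q₀) [Epi f]
    (P : C) [HasLeftDual P] (hP : Projective P) : Projective ((ᘁP : C)) := by
  haveI : Projective (P ⊗ (ᘁP : C)) := projective_whiskerRight P (ᘁP) hP
  have htf : Projective.factorThru (ε_ (ᘁP : C) P) f ≫ f = ε_ (ᘁP : C) P :=
    Projective.factorThru_comp _ _
  set t : P ⊗ (ᘁP : C) ⟶ Q₀ := Projective.factorThru (ε_ (ᘁP : C) P) f with ht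
  refine projective_of_retract
    ((λ_ (ᘁP : C)).inv ≫ η_ (ᘁP : C) P ▷ (ᘁP : C) ≫ (α_ _ _ _).hom ≫ (ᘁP : C) ◁ t)
    (((ᘁP : C) ◁ f) ≫ (ρ_ _).hom) ?_ (projective_whiskerLeft (ᘁP) Q₀ hQ₀)
  slice_lhs 4 5 => rw [← MonoidalCategory.whiskerLeft_comp, htf]
  slice_lhs 2 4 => rw [evaluation_coevaluation]
  simp

theorem whiskerLeft_leftAdjointMate_comp_tensorRightHomEquiv {A B X T : C} (i : A ⟶ B)
    (m : X ⊗ (ᘁA : C) ⟶ T) :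
    (tensorRightHomEquiv X (ᘁB : C) B T) ((X ◁ (ᘁi)) ≫ m)
      = (tensorRightHomEquiv X (ᘁA : C) A T) m ≫ (T ◁ i) := by
  dsimp [tensorRightHomEquiv]
  rw [comp_whiskerRight]
  slice_rhs 4 5 => rw [← whisker_exchange]
  rw [← associator_inv_naturality_middle_assoc, ← MonoidalCategory.whiskerLeft_comp_assoc,
    coevaluation_comp_leftAdjointMate, MonoidalCategory.whiskerLeft_comp_assoc,
    associator_inv_naturality_right_assoc]

theorem whiskerRight_comp_tensorLeftHomEquiv_symm {A B Z : C} (i : A ⟶ B) (Y : C)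
    (n : Y ⟶ (ᘁB : C) ⊗ Z) :
    (i ▷ Y) ≫ (tensorLeftHomEquiv Y (ᘁB : C) B Z).symm n
      = (tensorLeftHomEquiv Y (ᘁA : C) A Z).symm (n ≫ ((ᘁi) ▷ Z)) := by
  dsimp [tensorLeftHomEquiv]
  slice_lhs 1 2 => rw [← whisker_exchange]
  simp only [Category.assoc]
  rw [associator_inv_naturality_left_assoc, ← comp_whiskerRight_assoc,
    ← leftAdjointMate_comp_evaluation]
  rw [comp_whiskerRight_assoc, ← associator_inv_naturality_middle_assoc,
    ← MonoidalCategory.whiskerLeft_comp_assoc]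

theorem epi_leftAdjointMate {A B : C} (i : A ⟶ B) [Mono i] :
    Epi ((ᘁi) : (ᘁB : C) ⟶ (ᘁA : C)) := by
  constructor
  intro T u v huv
  haveI : Mono (T ◁ i) := by
    haveI := tensorLeft_pres_mono (C := C) T
    exact (tensorLeft T).map_mono i
  have key : ∀ w : (ᘁA : C) ⟶ T,
      (tensorRightHomEquiv (𝟙_ C) (ᘁB : C) B T) ((λ_ _).hom ≫ (ᘁi) ≫ w)
        = (tensorRightHomEquiv (𝟙_ C) (ᘁA : C) A T) ((λ_ _).hom ≫ w) ≫ (T ◁ i) := by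
    intro w
    rw [← whiskerLeft_leftAdjointMate_comp_tensorRightHomEquiv i ((λ_ _).hom ≫ w)]
    congr 1
    rw [← MonoidalCategory.leftUnitor_naturality_assoc]
  have h1 : (tensorRightHomEquiv (𝟙_ C) (ᘁA : C) A T) ((λ_ _).hom ≫ u) ≫ (T ◁ i)
      = (tensorRightHomEquiv (𝟙_ C) (ᘁA : C) A T) ((λ_ _).hom ≫ v) ≫ (T ◁ i) := by
    rw [← key u, ← key v, huv]
  have h2 := (cancel_mono (T ◁ i)).mp h1
  have h3 := (tensorRightHomEquiv (𝟙_ C) (ᘁA : C) A T).injective h2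
  rwa [cancel_epi] at h3

theorem rightDual_injective {Y : C} [HasRightDual Y] (hY : Projective Y) :
    Injective ((Yᘁ : C)) := by
  constructor
  intro A B g i hi
  haveI : Epi ((ᘁi) : (ᘁB : C) ⟶ (ᘁA : C)) := epi_leftAdjointMate i
  haveI := hY
  set Eg : Y ⟶ (ᘁA : C) :=
    (tensorLeftHomEquiv Y (ᘁA : C) A (𝟙_ C))
        ((tensorRightHomEquiv A Y (Yᘁ) (𝟙_ C)).symm (g ≫ (λ_ _).inv)) ≫ (ρ_ _).hom with hEg
  set t : Y ⟶ (ᘁB : C) := Projective.factorThru Eg (ᘁi) with htdef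
  have htE : t ≫ (ᘁi) = Eg := Projective.factorThru_comp _ _
  refine ⟨(tensorRightHomEquiv B Y (Yᘁ) (𝟙_ C))
      ((tensorLeftHomEquiv Y (ᘁB : C) B (𝟙_ C)).symm (t ≫ (ρ_ _).inv)) ≫ (λ_ _).hom, ?_⟩
  have step1 : i ≫ (tensorRightHomEquiv B Y (Yᘁ) (𝟙_ C))
      ((tensorLeftHomEquiv Y (ᘁB : C) B (𝟙_ C)).symm (t ≫ (ρ_ _).inv))
      = (tensorRightHomEquiv A Y (Yᘁ) (𝟙_ C))
          ((i ▷ Y) ≫ (tensorLeftHomEquiv Y (ᘁB : C) B (𝟙_ C)).symm (t ≫ (ρ_ _).inv)) := by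
    apply (tensorRightHomEquiv A Y (Yᘁ) (𝟙_ C)).symm.injective
    rw [Equiv.symm_apply_apply, tensorRightHomEquiv_symm_naturality, Equiv.symm_apply_apply]
  have step2 : (i ▷ Y) ≫ (tensorLeftHomEquiv Y (ᘁB : C) B (𝟙_ C)).symm (t ≫ (ρ_ _).inv)
      = (tensorLeftHomEquiv Y (ᘁA : C) A (𝟙_ C)).symm ((t ≫ (ρ_ _).inv) ≫ ((ᘁi) ▷ 𝟙_ C)) :=
    whiskerRight_comp_tensorLeftHomEquiv_symm i Y _
  have step3 : (t ≫ (ρ_ _).inv) ≫ ((ᘁi) ▷ 𝟙_ C) = Eg ≫ (ρ_ _).inv := by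
    rw [Category.assoc, ← rightUnitor_inv_naturality, ← Category.assoc, htE]
  have step4 : (tensorLeftHomEquiv Y (ᘁA : C) A (𝟙_ C)).symm (Eg ≫ (ρ_ _).inv)
      = (tensorRightHomEquiv A Y (Yᘁ) (𝟙_ C)).symm (g ≫ (λ_ _).inv) := by
    rw [hEg, Category.assoc, Iso.hom_inv_id, Category.comp_id, Equiv.symm_apply_apply]
  rw [← Category.assoc, step1, step2, step3, step4, Equiv.apply_symm_apply,
    Category.assoc, Iso.inv_hom_id, Category.comp_id]

theorem injective_of_retract {P R : C} (s : P ⟶ R) (r : R ⟶ P) (h : s ≫ r = 𝟙 P)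
    (hR : Injective R) : Injective P where
  factors {X Y} g m hm := by
    obtain ⟨h', hh⟩ := hR.factors (g ≫ s) m
    exact ⟨h' ≫ r, by rw [← Category.assoc, hh, Category.assoc, h, Category.comp_id]⟩

theorem unit_coev_mono {Q₀ : C} (f : Q₀ ⟶ 𝟙_ C) [Epi f] [Simple (𝟙_ C)] :
    Mono (η_ Q₀ (Q₀ᘁ)) := by
  have hne : η_ Q₀ (Q₀ᘁ) ≠ 0 := by
    intro h
    have hz1 := evaluation_coevaluation Q₀ (Q₀ᘁ)
    rw [h] at hz1
    simp only [MonoidalPreadditive.zero_whiskerRight, Limits.zero_comp] at hz1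
    have hidz : 𝟙 Q₀ = 0 := by
      have := congrArg (fun t => (λ_ Q₀).inv ≫ t ≫ (ρ_ Q₀).hom) hz1
      simpa using this.symm
    have hzero : Limits.IsZero Q₀ := (Limits.IsZero.iff_id_eq_zero Q₀).mpr hidz
    have hf0 : f = 0 := hzero.eq_of_src f 0
    have : 𝟙 (𝟙_ C) = 0 := by
      rw [← cancel_epi f, hf0]; simp
    exact CategoryTheory.id_nonzero (𝟙_ C) this
  by_cases hk : Limits.kernel.ι (η_ Q₀ (Q₀ᘁ)) = 0
  · exact Preadditive.mono_of_kernel_zero hk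
  · exfalso
    haveI := isIso_of_mono_of_nonzero hk
    apply hne
    rw [← cancel_epi (Limits.kernel.ι (η_ Q₀ (Q₀ᘁ))), Limits.kernel.condition,
      Limits.comp_zero]

end Monoidal

section Socle

variable {C : Type v} [Category.{w} C] [Abelian C]

theorem idempotent_eq_zero_or_id {Q : C} (hQ : IsIndecomposable Q) (e : Q ⟶ Q)
    (he : e ≫ e = e) : e = 0 ∨ e = 𝟙 Q := by
  have h1 : (𝟙 Q - e) ≫ e = 0 := by simp [Preadditive.sub_comp, he]
  have h2 : e ≫ (𝟙 Q - e) = 0 := by simp [Preadditive.comp_sub, he]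
  set A := Limits.kernel e with hA
  set B := Limits.kernel (𝟙 Q - e) with hB
  set pA : Q ⟶ A := Limits.kernel.lift e (𝟙 Q - e) h1 with hpA
  set pB : Q ⟶ B := Limits.kernel.lift (𝟙 Q - e) e h2 with hpB
  have hpAiA : pA ≫ Limits.kernel.ι e = 𝟙 Q - e := Limits.kernel.lift_ι _ _ _
  have hpBiB : pB ≫ Limits.kernel.ι (𝟙 Q - e) = e := Limits.kernel.lift_ι _ _ _
  have hiApA : Limits.kernel.ι e ≫ pA = 𝟙 A := by
    apply (cancel_mono (Limits.kernel.ι e)).mp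
    rw [Category.assoc, hpAiA, Preadditive.comp_sub, Limits.kernel.condition]
    simp; exact (Category.id_comp _).symm
  have hiBpB : Limits.kernel.ι (𝟙 Q - e) ≫ pB = 𝟙 B := by
    apply (cancel_mono (Limits.kernel.ι (𝟙 Q - e))).mp
    rw [Category.assoc, hpBiB]
    have := Limits.kernel.condition (𝟙 Q - e)
    rw [Preadditive.comp_sub] at this
    rw [sub_eq_zero] at this
    exact (this.symm.trans (Category.comp_id _)).trans (Category.id_comp _).symm
  have hiApB : Limits.kernel.ι e ≫ pB = 0 := by
    apply (cancel_mono (Limits.kernel.ι (𝟙 Q - e))).mp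
    rw [Category.assoc, hpBiB, Limits.kernel.condition, Limits.zero_comp]
  have hiBpA : Limits.kernel.ι (𝟙 Q - e) ≫ pA = 0 := by
    apply (cancel_mono (Limits.kernel.ι e)).mp
    rw [Category.assoc, hpAiA]
    have := Limits.kernel.condition (𝟙 Q - e)
    rw [Limits.zero_comp]
    exact this
  have hiso : Q ≅ A ⊞ B := by
    refine ⟨Limits.biprod.lift pA pB, Limits.biprod.desc (Limits.kernel.ι e)
      (Limits.kernel.ι (𝟙 Q - e)), ?_, ?_⟩
    · rw [Limits.biprod.lift_desc, hpAiA, hpBiB]; simp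
    · apply Limits.biprod.hom_ext' <;> apply Limits.biprod.hom_ext <;>
        simp [hiApA, hiApB, hiBpA, hiBpB]
  rcases hQ.2 A B hiso with hz | hz
  · right
    have : pA = 0 := hz.eq_of_tgt pA 0
    rw [this, Limits.zero_comp] at hpAiA
    have := hpAiA.symm
    rwa [sub_eq_zero, eq_comm] at this
  · left
    have : pB = 0 := hz.eq_of_tgt pB 0
    rw [this, Limits.zero_comp] at hpBiB
    exact hpBiB.symm

theorem unique_simple_subobject {k : Type u} [Field k] [CategoryTheory.Linear k C] {Q : C}
    (hfd : FiniteDimensional k (Q ⟶ Q)) (hwf : WellFoundedLT (Subobject Q))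
    (hQ : IsIndecomposable Q) (hinj : Injective Q) :
    ∃! S : Subobject Q, Simple (S : C) := by
  haveI := hwf
  haveI : FiniteDimensional k (End Q) := hfd
  -- every endomorphism is unit or nilpotent
  have hun : ∀ φ : End Q, IsUnit φ ∨ IsNilpotent φ := by
    apply isUnit_or_isNilpotent_of_idem (k := k)
    intro e he
    have he' : (e : Q ⟶ Q) ≫ e = e := he
    exact idempotent_eq_zero_or_id hQ e he'
  -- a subobject with zero arrow is ⊥
  have arrow_ne : ∀ S : Subobject Q, S ≠ ⊥ → S.arrow ≠ 0 := by
    intro S hS h0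
    apply hS
    rw [← le_bot_iff]
    exact Subobject.le_of_comm (0 : (S : C) ⟶ ((⊥ : Subobject Q) : C)) (by simp [h0])
  -- two distinct atoms lead to a contradiction
  have key : ∀ S T : Subobject Q, IsAtom S → IsAtom T → S ⊓ T = ⊥ → False := by
    intro S T hS hT hST
    set p : Q ⟶ Limits.cokernel T.arrow := Limits.cokernel.π T.arrow with hp
    have hmono : Mono (S.arrow ≫ p) := by
      apply Preadditive.mono_of_cancel_zero
      intro W w hw
      rw [← Category.assoc] at hw
      set l := Abelian.monoLift T.arrow (w ≫ S.arrow) hw with hl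
      have hlT : l ≫ T.arrow = w ≫ S.arrow := Abelian.monoLift_comp _ _ _
      have hfacts : (S ⊓ T).Factors (w ≫ S.arrow) :=
        (Subobject.inf_factors _).mpr
          ⟨Subobject.factors_comp_arrow w, hlT ▸ Subobject.factors_comp_arrow l⟩
      rw [hST, Subobject.bot_factors_iff_zero] at hfacts
      exact Limits.zero_of_comp_mono S.arrow hfacts
    haveI := hmono
    set h : Limits.cokernel T.arrow ⟶ Q := Injective.factorThru S.arrow (S.arrow ≫ p) with hh
    have hcomp : (S.arrow ≫ p) ≫ h = S.arrow := Injective.comp_factorThru _ _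
    set φ : End Q := p ≫ h with hφ
    have hφS : S.arrow ≫ φ = S.arrow := by
      rw [hφ, ← Category.assoc]; exact hcomp
    have hφT : T.arrow ≫ φ = 0 := by
      rw [hφ, ← Category.assoc, Limits.cokernel.condition, Limits.zero_comp]
    have hpow : ∀ n : ℕ, S.arrow ≫ (φ ^ n : End Q) = S.arrow := by
      intro n
      induction n with
      | zero =>
        rw [pow_zero]
        exact Category.comp_id S.arrow
      | succ n ih =>
        have hmul : (φ ^ (n + 1) : End Q) = ((φ : Q ⟶ Q) ≫ (φ ^ n : End Q) : Q ⟶ Q) := by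
          rw [pow_succ]
          rfl
        rw [hmul, ← Category.assoc, hφS, ih]
    rcases hun φ with hu | ⟨n, hn⟩
    · -- unit: T.arrow = 0, contradiction
      haveI : IsIso (φ : Q ⟶ Q) := (isUnit_iff_isIso φ).mp hu
      apply arrow_ne T hT.1
      calc T.arrow = (T.arrow ≫ φ) ≫ inv (φ : Q ⟶ Q) := by
            rw [Category.assoc, IsIso.hom_inv_id, Category.comp_id]
        _ = 0 := by rw [hφT, Limits.zero_comp]
    · -- nilpotent: S.arrow = 0, contradiction
      apply arrow_ne S hS.1
      have h0 := hpow n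
      rw [hn] at h0
      simpa using h0.symm
  -- existence of an atom
  have hQne : ¬ Limits.IsZero Q := hQ.1
  rcases IsAtomic.eq_bot_or_exists_atom_le (⊤ : Subobject Q) with htop | ⟨S, hS, _⟩
  · exfalso
    apply hQne
    have harr : (⊤ : Subobject Q).arrow = 0 := by rw [htop]; exact Subobject.bot_arrow
    have : 𝟙 Q = 0 := by
      rw [← Subobject.underlyingIso_inv_top_arrow (B := Q), harr, Limits.comp_zero]
    exact (Limits.IsZero.iff_id_eq_zero Q).mpr this
  · refine ⟨S, (CategoryTheory.subobject_simple_iff_isAtom S).mpr hS, ?_⟩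
    intro T hTsimple
    have hT : IsAtom T := (CategoryTheory.subobject_simple_iff_isAtom T).mp hTsimple
    by_contra hne
    rcases (hS.le_iff.mp (inf_le_left : S ⊓ T ≤ S)) with h | h
    · exact key S T hS hT h
    · have hSle : S ≤ T := by
        rw [← h]; exact inf_le_right
      exact hne (((hT.le_iff.mp hSle).resolve_left hS.1).symm)
end Socle

end FTCAux

/-- In a finite tensor category, duals of projective objects are projective; consequently
projective and injective objects coincide, and every indecomposable projective object has a
unique simple subobject (its socle). -/
theorem dual_projective {k : Type u} {C : Type v} [Field k] [IsAlgClosed k]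
    [Category.{w} C] [Abelian C] [CategoryTheory.Linear k C] [MonoidalCategory C]
    [MonoidalPreadditive C] [MonoidalLinear k C] [RigidCategory C]
    [FiniteTensorCategory k C] :
    (∀ P : C, Projective P → Projective (Pᘁ) ∧ Projective ((ᘁP : C))) ∧
    (∀ X : C, Projective X ↔ Injective X) ∧
    (∀ Q : C, Projective Q → IsIndecomposable Q →
      ∃! S : Subobject Q, Simple (S : C)) := by
  obtain ⟨Q₀, f₀, hQ₀, hf₀, -⟩ :=
    FiniteTensorCategory.projectiveCovers (k := k) (𝟙_ C)
      (FiniteTensorCategory.simpleUnit (k := k))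
  haveI := hf₀
  haveI : Simple (𝟙_ C) := FiniteTensorCategory.simpleUnit (k := k)
  have partA : ∀ P : C, Projective P → Projective ((Pᘁ : C)) ∧ Projective ((ᘁP : C)) :=
    fun P hP => ⟨FTCAux.rightDual_projective f₀ hQ₀ P hP,
      FTCAux.leftDual_projective f₀ hQ₀ P hP⟩
  have partB : ∀ X : C, Projective X ↔ Injective X := by
    intro X
    constructor
    · intro hX
      have h1 : Projective ((ᘁX : C)) := (partA X hX).2
      exact FTCAux.rightDual_injective (Y := (ᘁX : C)) h1
    · intro hX
      haveI : Mono (η_ Q₀ (Q₀ᘁ)) := FTCAux.unit_coev_mono f₀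
      haveI := FTCAux.tensorRight_pres_mono (C := C) X
      haveI : Mono ((η_ Q₀ (Q₀ᘁ)) ▷ X) := (tensorRight X).map_mono (η_ Q₀ (Q₀ᘁ))
      have hmono : Mono ((λ_ X).inv ≫ (η_ Q₀ (Q₀ᘁ) ▷ X)) := mono_comp _ _
      haveI := hmono
      obtain ⟨r, hr⟩ := hX.factors (𝟙 X) ((λ_ X).inv ≫ (η_ Q₀ (Q₀ᘁ) ▷ X))
      exact FTCAux.projective_of_retract _ r hr
        (FTCAux.projective_whiskerRight _ X
          (FTCAux.projective_whiskerRight Q₀ (Q₀ᘁ) hQ₀))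
  refine ⟨partA, partB, ?_⟩
  intro Q hQp hQind
  haveI := hQp
  have hQinj : Injective Q := (partB Q).mp hQp
  have hwf : WellFoundedLT (Subobject Q) := (FiniteTensorCategory.finiteLength (k := k) Q).2
  have hfd : FiniteDimensional k (Q ⟶ Q) := FiniteTensorCategory.homFinite Q Q
  exact FTCAux.unique_simple_subobject hfd hwf hQind hQinj
end

section
/- Let C be a finite tensor category with simple objects L_i and projective covers P_i, and let D: I → I be the bijection on labels defined by P_i* ≅ P_{D(i)}. Let ρ := D(0), where 0 labels the unit object. Then the simple object L_ρ is invertible, i.e. L_ρ ⊗ L_ρ* ≅ 1 ≅ L_ρ* ⊗ L_ρ. -/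
open CategoryTheory MonoidalCategory Limits

universe u v w

namespace DOI

variable {C : Type v} [Category.{w} C]

section Basic
variable [Preadditive C]

lemma epi_ne_zero {A B : C} (f : A ⟶ B) [Epi f] (hB : ¬ IsZero B) : f ≠ 0 := by
  intro h
  apply hB
  rw [IsZero.iff_id_eq_zero]
  have : f ≫ 𝟙 B = f ≫ 0 := by simp [h]
  exact (cancel_epi f).mp this

lemma mono_ne_zero {A B : C} (f : A ⟶ B) [Mono f] (hA : ¬ IsZero A) : f ≠ 0 := by
  intro h
  apply hA
  rw [IsZero.iff_id_eq_zero]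
  have : 𝟙 A ≫ f = 0 ≫ f := by simp [h]
  exact (cancel_mono f).mp this

lemma comp_ne_zero_of_isIso_right {A B B' : C} (f : A ⟶ B) (g : B ⟶ B') [IsIso g]
    (h : f ≠ 0) : f ≫ g ≠ 0 := by
  intro hz
  apply h
  have := congrArg (· ≫ inv g) hz
  simpa using this

lemma comp_ne_zero_of_isIso_left {A' A B : C} (g : A' ⟶ A) (f : A ⟶ B) [IsIso g]
    (h : f ≠ 0) : g ≫ f ≠ 0 := by
  intro hz
  apply h
  have := congrArg (inv g ≫ ·) hz
  simpa using this

end Basic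

section Endo

/-- `f ≫ f ≫ ⋯ ≫ f` (`n` times). -/
def pw {X : C} (f : X ⟶ X) : ℕ → (X ⟶ X)
  | 0 => 𝟙 X
  | n + 1 => f ≫ pw f n

lemma pw_succ {X : C} (f : X ⟶ X) (n : ℕ) : pw f (n + 1) = f ≫ pw f n := rfl

lemma pw_comm {X : C} (f : X ⟶ X) (n : ℕ) : f ≫ pw f n = pw f n ≫ f := by
  induction n with
  | zero => simp [pw]
  | succ n ih =>
    calc f ≫ (f ≫ pw f n) = f ≫ (pw f n ≫ f) := by rw [ih]
      _ = (f ≫ pw f n) ≫ f := (Category.assoc _ _ _).symm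

lemma pw_succ' {X : C} (f : X ⟶ X) (n : ℕ) : pw f (n + 1) = pw f n ≫ f := by
  rw [pw_succ, pw_comm]

instance pw_mono {X : C} (f : X ⟶ X) [Mono f] (n : ℕ) : Mono (pw f n) := by
  induction n with
  | zero => exact inferInstanceAs (Mono (𝟙 X))
  | succ n ih => exact @mono_comp C _ _ _ _ f ‹Mono f› (pw f n) ih

instance pw_epi {X : C} (f : X ⟶ X) [Epi f] (n : ℕ) : Epi (pw f n) := by
  induction n with
  | zero => exact inferInstanceAs (Epi (𝟙 X))
  | succ n ih => exact @epi_comp C _ _ _ _ f ‹Epi f› (pw f n) ih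

variable [Abelian C]

lemma isIso_of_mono_endo {X : C} (hw : WellFoundedLT (Subobject X)) (f : X ⟶ X) [Mono f] :
    IsIso f := by
  obtain ⟨b, ⟨N, rfl⟩, hmin⟩ := hw.wf.has_min (Set.range fun n => Subobject.mk (pw f n))
    ⟨_, ⟨0, rfl⟩⟩
  have hdec : Subobject.mk (pw f (N + 1)) ≤ Subobject.mk (pw f N) :=
    Subobject.mk_le_mk_of_comm f (pw_succ f N).symm
  have heq : Subobject.mk (pw f (N + 1)) = Subobject.mk (pw f N) := by
    rcases lt_or_eq_of_le hdec with hlt | h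
    · exact absurd hlt (hmin _ ⟨N + 1, rfl⟩)
    · exact h
  have hle : Subobject.mk (pw f N) ≤ Subobject.mk (pw f (N + 1)) := le_of_eq heq.symm
  have hv : Subobject.ofMkLEMk (pw f N) (pw f (N + 1)) hle ≫ pw f (N + 1) = pw f N :=
    Subobject.ofMkLEMk_comp hle
  have hvf : Subobject.ofMkLEMk (pw f N) (pw f (N + 1)) hle ≫ f = 𝟙 X := by
    have h2 : (Subobject.ofMkLEMk (pw f N) (pw f (N + 1)) hle ≫ f) ≫ pw f N
        = 𝟙 X ≫ pw f N := by
      rw [Category.assoc, ← pw_succ f N, hv, Category.id_comp]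
    exact (cancel_mono (pw f N)).mp h2
  haveI : IsSplitEpi f := ⟨⟨⟨_, hvf⟩⟩⟩
  exact isIso_of_mono_of_epi f

lemma isIso_of_epi_endo {X : C} (hw : WellFoundedGT (Subobject X)) (f : X ⟶ X) [Epi f] :
    IsIso f := by
  obtain ⟨b, ⟨N, rfl⟩, hmax⟩ := hw.wf.has_min (Set.range fun n => kernelSubobject (pw f n))
    ⟨_, ⟨0, rfl⟩⟩
  have hinc : kernelSubobject (pw f N) ≤ kernelSubobject (pw f (N + 1)) := by
    rw [pw_succ']
    exact kernelSubobject_comp_le (pw f N) f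
  have heq : kernelSubobject (pw f (N + 1)) = kernelSubobject (pw f N) := by
    rcases lt_or_eq_of_le hinc with hlt | h
    · exact absurd hlt (hmax _ ⟨N + 1, rfl⟩)
    · exact h.symm
  have hsnd : pullback.snd (kernel.ι f) (pw f N) ≫ pw f (N + 1) = 0 := by
    rw [pw_succ' f N, ← Category.assoc, ← pullback.condition, Category.assoc, kernel.condition,
      comp_zero]
  have hfac : (kernelSubobject (pw f N)).Factors (pullback.snd (kernel.ι f) (pw f N)) :=
    heq ▸ kernelSubobject_factors _ _ hsnd
  have hs2 : pullback.snd (kernel.ι f) (pw f N) ≫ pw f N = 0 := by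
    rw [← (kernelSubobject (pw f N)).factorThru_arrow _ hfac, Category.assoc,
      kernelSubobject_arrow_comp, comp_zero]
  have h0 : pullback.fst (kernel.ι f) (pw f N) ≫ kernel.ι f = 0 := by
    rw [pullback.condition, hs2]
  have hι : kernel.ι f = 0 := by
    haveI : Epi (pullback.fst (kernel.ι f) (pw f N)) := Abelian.epi_pullback_of_epi_g _ _
    have h3 : pullback.fst (kernel.ι f) (pw f N) ≫ kernel.ι f =
        pullback.fst (kernel.ι f) (pw f N) ≫ 0 := by simpa using h0
    exact (cancel_epi _).mp h3
  haveI : Mono f := Abelian.mono_of_kernel_ι_eq_zero f hι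
  exact isIso_of_mono_of_epi f

end Endo

section Monoidal
variable [MonoidalCategory C]


section Zig
variable [Preadditive C] [MonoidalPreadditive C]

lemma id_eq_zero_of_ev_zero (X Y : C) [ExactPairing X Y] (h : ε_ X Y = 0) : 𝟙 X = 0 := by
  have hz := ExactPairing.evaluation_coevaluation (X := X) (Y := Y)
  rw [h] at hz
  simp only [MonoidalPreadditive.whiskerLeft_zero, comp_zero] at hz
  have : (λ_ X).inv ≫ ((λ_ X).hom ≫ (ρ_ X).inv) ≫ (ρ_ X).hom = 𝟙 X := by simp
  rw [← hz] at this
  simpa using this.symm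

lemma id_eq_zero_of_coev_zero (X Y : C) [ExactPairing X Y] (h : η_ X Y = 0) : 𝟙 X = 0 := by
  have hz := ExactPairing.evaluation_coevaluation (X := X) (Y := Y)
  rw [h] at hz
  simp only [MonoidalPreadditive.zero_whiskerRight, zero_comp] at hz
  have : (λ_ X).inv ≫ ((λ_ X).hom ≫ (ρ_ X).inv) ≫ (ρ_ X).hom = 𝟙 X := by simp
  rw [← hz] at this
  simpa using this.symm

lemma coev_ne_zero (X Y : C) [ExactPairing X Y] (h : ¬ IsZero X) : η_ X Y ≠ 0 := by
  intro hz
  exact h ((IsZero.iff_id_eq_zero X).mpr (id_eq_zero_of_coev_zero X Y hz))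

lemma ev_ne_zero (X Y : C) [ExactPairing X Y] (h : ¬ IsZero X) : ε_ X Y ≠ 0 := by
  intro hz
  exact h ((IsZero.iff_id_eq_zero X).mpr (id_eq_zero_of_ev_zero X Y hz))

lemma isZero_of_isZero_dual (X Y : C) [ExactPairing X Y] (h : IsZero Y) : IsZero X := by
  rw [IsZero.iff_id_eq_zero X]
  apply id_eq_zero_of_ev_zero X Y
  have h1 : 𝟙 Y = 0 := (IsZero.iff_id_eq_zero Y).mp h
  calc ε_ X Y = (𝟙 Y ▷ X) ≫ ε_ X Y := by simp
    _ = 0 := by rw [h1]; simp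

end Zig

section Whisker
variable [RigidCategory C]

lemma epi_whiskerRight_of {A B : C} (f : A ⟶ B) [Epi f] (Y : C) : Epi (f ▷ Y) := by
  haveI := Functor.preservesEpimorphisms_of_adjunction (tensorRightAdjunction Y (Yᘁ))
  simpa using (tensorRight Y).map_epi f

lemma mono_whiskerRight_of {A B : C} (f : A ⟶ B) [Mono f] (Y : C) : Mono (f ▷ Y) := by
  haveI := Functor.preservesMonomorphisms_of_adjunction (tensorRightAdjunction (ᘁY) Y)
  simpa using (tensorRight Y).map_mono f

lemma epi_whiskerLeft_of (X : C) {A B : C} (f : A ⟶ B) [Epi f] : Epi (X ◁ f) := by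
  haveI := Functor.preservesEpimorphisms_of_adjunction (tensorLeftAdjunction (ᘁX) X)
  simpa using (tensorLeft X).map_epi f

lemma mono_whiskerLeft_of (X : C) {A B : C} (f : A ⟶ B) [Mono f] : Mono (X ◁ f) := by
  haveI := Functor.preservesMonomorphisms_of_adjunction (tensorLeftAdjunction X (Xᘁ))
  simpa using (tensorLeft X).map_mono f

lemma projective_tensorRight (Q Y : C) [Projective Q] : Projective (Q ⊗ Y) := by
  constructor
  intro E X f e he
  haveI : Epi (e ▷ (Yᘁ)) := epi_whiskerRight_of e (Yᘁ)
  refine ⟨(tensorRightHomEquiv Q Y (Yᘁ) E).symm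
    (Projective.factorThru ((tensorRightHomEquiv Q Y (Yᘁ) X) f) (e ▷ (Yᘁ))), ?_⟩
  apply (tensorRightHomEquiv Q Y (Yᘁ) X).injective
  rw [tensorRightHomEquiv_naturality]
  rw [Equiv.apply_symm_apply]
  rw [Projective.factorThru_comp]

lemma projective_tensorLeft (Y Q : C) [Projective Q] : Projective (Y ⊗ Q) := by
  constructor
  intro E X f e he
  haveI : Epi ((ᘁY) ◁ e) := epi_whiskerLeft_of (ᘁY) e
  refine ⟨(tensorLeftHomEquiv Q (ᘁY) Y E).symm
    (Projective.factorThru ((tensorLeftHomEquiv Q (ᘁY) Y X) f) ((ᘁY) ◁ e)), ?_⟩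
  apply (tensorLeftHomEquiv Q (ᘁY) Y X).injective
  rw [tensorLeftHomEquiv_naturality]
  rw [Equiv.apply_symm_apply]
  rw [Projective.factorThru_comp]

end Whisker



section DualIsos

lemma isZero_of_isZero_dual' (X Y : C) [Preadditive C] [MonoidalPreadditive C]
    [ExactPairing X Y] (h : IsZero X) : IsZero Y := by
  rw [IsZero.iff_id_eq_zero Y]
  have h1 : 𝟙 X = 0 := (IsZero.iff_id_eq_zero X).mp h
  have hη : η_ X Y = 0 := by
    calc η_ X Y = η_ X Y ≫ (𝟙 X ▷ Y) := by simp
      _ = 0 := by rw [h1]; simp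
  have hz := ExactPairing.coevaluation_evaluation (X := X) (Y := Y)
  rw [hη] at hz
  simp only [MonoidalPreadditive.whiskerLeft_zero, zero_comp] at hz
  have h2 : (ρ_ Y).inv ≫ ((ρ_ Y).hom ≫ (λ_ Y).inv) ≫ (λ_ Y).hom = 𝟙 Y := by simp
  rw [← hz] at h2
  simpa using h2.symm

/-- dual of an iso (right duals). -/
noncomputable def dRight {A B : C} [HasRightDual A] [HasRightDual B] (e : A ≅ B) :
    ((Bᘁ : C) ≅ (Aᘁ : C)) where
  hom := rightAdjointMate e.hom
  inv := rightAdjointMate e.inv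
  hom_inv_id := by rw [← comp_rightAdjointMate, Iso.inv_hom_id, rightAdjointMate_id]
  inv_hom_id := by rw [← comp_rightAdjointMate, Iso.hom_inv_id, rightAdjointMate_id]

/-- dual of an iso (left duals). -/
noncomputable def dLeft {A B : C} [HasLeftDual A] [HasLeftDual B] (e : A ≅ B) :
    ((ᘁB : C) ≅ (ᘁA : C)) where
  hom := leftAdjointMate e.hom
  inv := leftAdjointMate e.inv
  hom_inv_id := by rw [← comp_leftAdjointMate, Iso.inv_hom_id, leftAdjointMate_id]
  inv_hom_id := by rw [← comp_leftAdjointMate, Iso.hom_inv_id, leftAdjointMate_id]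

/-- `ᘁ(Xᘁ) ≅ X`. -/
noncomputable def lrIso (X : C) [HasRightDual X] [i : HasLeftDual (Xᘁ : C)] :
    ((ᘁ(Xᘁ) : C) ≅ X) :=
  leftDualIso i.exact (HasRightDual.exact (X := X))

/-- `(ᘁX)ᘁ ≅ X`. -/
noncomputable def rlIso (X : C) [HasLeftDual X] [i : HasRightDual (ᘁX : C)] :
    (((ᘁX : C)ᘁ : C) ≅ X) :=
  rightDualIso i.exact (HasLeftDual.exact (Y := X))

/-- tensorLeft of a tensor product is the composite. -/
noncomputable def tensorLeftCompIso (A B : C) :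
    tensorLeft (A ⊗ B) ≅ tensorLeft B ⋙ tensorLeft A :=
  NatIso.ofComponents (fun X => α_ A B X) (by intros; simp)

/-- left dual of a tensor product. -/
noncomputable def dualTensorLeftIso (A B : C) [HasLeftDual A] [HasLeftDual B]
    [HasLeftDual (A ⊗ B)] : ((ᘁ(A ⊗ B) : C) ≅ (ᘁB : C) ⊗ (ᘁA : C)) := by
  have adj1 : tensorLeft (A ⊗ B) ⊣ tensorLeft (ᘁ(A ⊗ B) : C) :=
    tensorLeftAdjunction (ᘁ(A ⊗ B) : C) (A ⊗ B)
  have adj2 : tensorLeft (A ⊗ B) ⊣ (tensorLeft (ᘁA : C) ⋙ tensorLeft (ᘁB : C)) :=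
    ((tensorLeftAdjunction (ᘁB : C) B).comp (tensorLeftAdjunction (ᘁA : C) A)).ofNatIsoLeft
      (tensorLeftCompIso A B).symm
  exact (ρ_ _).symm ≪≫ (Adjunction.rightAdjointUniq adj1 adj2).app (𝟙_ C) ≪≫
    whiskerLeftIso (ᘁB : C) (ρ_ (ᘁA : C))

end DualIsos

section Mate
variable [Preadditive C] [MonoidalPreadditive C]

/-- The right-mate as an equivalence of hom-sets. -/
noncomputable def mateREquiv (X Y : C) [HasRightDual X] [HasRightDual Y] :
    (X ⟶ Y) ≃ ((Yᘁ : C) ⟶ (Xᘁ : C)) :=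
  ((Iso.homCongr (Iso.refl X) (ρ_ Y).symm).trans
    ((tensorLeftHomEquiv X Y (Yᘁ) (𝟙_ C)).symm)).trans
    ((tensorRightHomEquiv (Yᘁ) X (Xᘁ) (𝟙_ C)).trans
      (Iso.homCongr (Iso.refl (Yᘁ : C)) (λ_ (Xᘁ : C))))

lemma tlhe_symm_rho_inv (Y : C) [HasRightDual Y] :
    (tensorLeftHomEquiv Y Y (Yᘁ) (𝟙_ C)).symm ((ρ_ Y).inv) = ε_ Y (Yᘁ) := by
  dsimp [tensorLeftHomEquiv]
  monoidal

lemma mateREquiv_eq {X Y : C} [HasRightDual X] [HasRightDual Y] (f : X ⟶ Y) :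
    mateREquiv X Y f = rightAdjointMate f := by
  dsimp [mateREquiv]
  simp only [Iso.homCongr_apply, Iso.refl_inv, Iso.symm_hom]
  rw [show (𝟙 X ≫ f ≫ (ρ_ Y).inv) = f ≫ (ρ_ Y).inv by simp]
  rw [tensorLeftHomEquiv_symm_naturality f ((ρ_ Y).inv), tlhe_symm_rho_inv]
  rw [tensorRightHomEquiv_whiskerLeft_comp_evaluation]
  simp

lemma mateR_zero (X Y : C) [HasRightDual X] [HasRightDual Y] :
    rightAdjointMate (0 : X ⟶ Y) = (0 : (Yᘁ : C) ⟶ (Xᘁ : C)) := by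
  simp [rightAdjointMate]

lemma mateR_ne_zero {X Y : C} [HasRightDual X] [HasRightDual Y] {f : X ⟶ Y} (h : f ≠ 0) :
    rightAdjointMate f ≠ 0 := by
  intro hz
  apply h
  have h0 : mateREquiv X Y f = mateREquiv X Y 0 := by
    rw [mateREquiv_eq, mateREquiv_eq, mateR_zero, hz]
  exact (mateREquiv X Y).injective h0

end Mate

section MateRigid
variable [Abelian C] [MonoidalPreadditive C] [RigidCategory C]

lemma mateR_epi_of_mono {A B : C} [HasRightDual A] [HasRightDual B] (m : A ⟶ B) [Mono m] :
    Epi (rightAdjointMate m) := by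
  constructor
  intro Z u v huv
  have key : ∀ t : (ᘁZ : C) ⟶ A,
      rightAdjointMate m ≫ rightAdjointMate t = mateREquiv (ᘁZ : C) B (t ≫ m) := by
    intro t
    rw [mateREquiv_eq, comp_rightAdjointMate]
  set tu := (mateREquiv (ᘁZ : C) A).symm (u ≫ (rlIso Z).inv) with htu
  set tv := (mateREquiv (ᘁZ : C) A).symm (v ≫ (rlIso Z).inv) with htv
  have hu : rightAdjointMate tu = u ≫ (rlIso Z).inv := by
    rw [← mateREquiv_eq, htu, Equiv.apply_symm_apply]
  have hv : rightAdjointMate tv = v ≫ (rlIso Z).inv := by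
    rw [← mateREquiv_eq, htv, Equiv.apply_symm_apply]
  have h2 : mateREquiv (ᘁZ : C) B (tu ≫ m) = mateREquiv (ᘁZ : C) B (tv ≫ m) := by
    calc mateREquiv (ᘁZ : C) B (tu ≫ m) = rightAdjointMate m ≫ rightAdjointMate tu :=
          (key tu).symm
      _ = (rightAdjointMate m ≫ u) ≫ (rlIso Z).inv := by rw [hu, Category.assoc]
      _ = (rightAdjointMate m ≫ v) ≫ (rlIso Z).inv := by rw [huv]
      _ = rightAdjointMate m ≫ rightAdjointMate tv := by rw [Category.assoc, ← hv]
      _ = mateREquiv (ᘁZ : C) B (tv ≫ m) := key tv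
  have h4 : tu ≫ m = tv ≫ m := (mateREquiv (ᘁZ : C) B).injective h2
  have h5 : tu = tv := (cancel_mono m).mp h4
  have h6 : u ≫ (rlIso Z).inv = v ≫ (rlIso Z).inv := by
    rw [← hu, ← hv, h5]
  calc u = (u ≫ (rlIso Z).inv) ≫ (rlIso Z).hom := by simp
    _ = (v ≫ (rlIso Z).inv) ≫ (rlIso Z).hom := by rw [h6]
    _ = v := by simp

/-- the left dual of a simple object is simple. -/
lemma simple_leftDual (S : C) [Simple S] : Simple (ᘁS : C) := by
  constructor
  intro Y m hm
  constructor
  · intro hiso hz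
    haveI := hiso
    have hzY : IsZero (ᘁS : C) := by
      rw [IsZero.iff_id_eq_zero]
      calc 𝟙 (ᘁS : C) = inv m ≫ m := (IsIso.inv_hom_id m).symm
        _ = 0 := by rw [congrArg (inv m ≫ ·) hz]; simp
    exact Simple.not_isZero S (isZero_of_isZero_dual' (ᘁS : C) S hzY)
  · intro hne
    haveI : Epi (rightAdjointMate m) := mateR_epi_of_mono m
    have hmne : rightAdjointMate m ≠ 0 := mateR_ne_zero hne
    have hg : ((rlIso S).inv ≫ rightAdjointMate m) ≠ 0 := by
      intro h
      apply hmne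
      have := congrArg ((rlIso S).hom ≫ ·) h
      simpa using this
    haveI : Epi ((rlIso S).inv ≫ rightAdjointMate m) := epi_comp _ _
    haveI : IsIso ((rlIso S).inv ≫ rightAdjointMate m) := isIso_of_epi_of_nonzero hg
    haveI : IsIso (rightAdjointMate m) := by
      have h7 : rightAdjointMate m = (rlIso S).hom ≫ ((rlIso S).inv ≫ rightAdjointMate m) := by
        simp
      rw [h7]; infer_instance
    obtain ⟨t, ht⟩ : ∃ t : (ᘁS : C) ⟶ Y, rightAdjointMate t = inv (rightAdjointMate m) :=
      ⟨(mateREquiv _ _).symm (inv (rightAdjointMate m)), by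
        rw [← mateREquiv_eq, Equiv.apply_symm_apply]⟩
    have h1 : m ≫ t = 𝟙 Y := by
      apply (mateREquiv Y Y).injective
      rw [mateREquiv_eq, comp_rightAdjointMate, ht, mateREquiv_eq, rightAdjointMate_id,
        IsIso.inv_hom_id]
    have h2 : t ≫ m = 𝟙 (ᘁS : C) := by
      apply (mateREquiv (ᘁS : C) (ᘁS : C)).injective
      rw [mateREquiv_eq, comp_rightAdjointMate, ht, mateREquiv_eq, rightAdjointMate_id,
        IsIso.hom_inv_id]
    exact ⟨⟨t, h1, h2⟩⟩

end MateRigid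

section LinearStuff
variable (k : Type u) [Field k]
variable [Preadditive C] [CategoryTheory.Linear k C] [MonoidalPreadditive C] [MonoidalLinear k C]

lemma tlhe_smul {X Y Y' Z : C} [ExactPairing Y Y'] (c : k) (f : Y' ⊗ X ⟶ Z) :
    (tensorLeftHomEquiv X Y Y' Z) (c • f) = c • (tensorLeftHomEquiv X Y Y' Z) f := by
  simp [tensorLeftHomEquiv]

lemma tlhe_symm_smul {X Y Y' Z : C} [ExactPairing Y Y'] (c : k) (f : X ⟶ Y ⊗ Z) :
    (tensorLeftHomEquiv X Y Y' Z).symm (c • f) = c • (tensorLeftHomEquiv X Y Y' Z).symm f := by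
  simp [tensorLeftHomEquiv]

lemma trhe_smul {X Y Y' Z : C} [ExactPairing Y Y'] (c : k) (f : X ⊗ Y ⟶ Z) :
    (tensorRightHomEquiv X Y Y' Z) (c • f) = c • (tensorRightHomEquiv X Y Y' Z) f := by
  simp [tensorRightHomEquiv]

lemma trhe_symm_smul {X Y Y' Z : C} [ExactPairing Y Y'] (c : k) (f : X ⟶ Z ⊗ Y') :
    (tensorRightHomEquiv X Y Y' Z).symm (c • f) = c • (tensorRightHomEquiv X Y Y' Z).symm f := by
  simp [tensorRightHomEquiv]

lemma homCongr_smul {A B A' B' : C} (i : A ≅ A') (j : B ≅ B') (c : k) (f : A ⟶ B) :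
    (Iso.homCongr i j) (c • f) = c • (Iso.homCongr i j) f := by
  simp [Iso.homCongr]

/-- `D2`: `Hom(A, Bᘁ) ≃ Hom(B, ᘁA)`. -/
noncomputable def D2 (A B : C) [HasRightDual B] [HasLeftDual A] :
    (A ⟶ (Bᘁ : C)) ≃ (B ⟶ (ᘁA : C)) :=
  ((Iso.homCongr (Iso.refl A) (λ_ (Bᘁ : C)).symm).trans
    ((tensorRightHomEquiv A B (Bᘁ) (𝟙_ C)).symm)).trans
    ((tensorLeftHomEquiv B (ᘁA : C) A (𝟙_ C)).trans
      (Iso.homCongr (Iso.refl B) (ρ_ (ᘁA : C))))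

lemma D2_smul {A B : C} [HasRightDual B] [HasLeftDual A] (c : k) (f : A ⟶ (Bᘁ : C)) :
    D2 A B (c • f) = c • D2 A B f := by
  dsimp only [D2, Equiv.trans_apply]
  rw [homCongr_smul, trhe_symm_smul, tlhe_smul, homCongr_smul]

end LinearStuff

section Span
variable {k : Type u} [Field k]
variable {M N : Type*} [AddCommGroup M] [Module k M] [AddCommGroup N] [Module k N]

lemma map_zero_of_smul (e : M → N) (hs : ∀ (c : k) (x : M), e (c • x) = c • e x) : e 0 = 0 := by
  have := hs 0 0
  simpa using this

lemma map_ne_zero_of_smul (e : M → N) (hinj : Function.Injective e)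
    (hs : ∀ (c : k) (x : M), e (c • x) = c • e x) {x : M} (hx : x ≠ 0) : e x ≠ 0 := by
  intro h
  exact hx (hinj (h.trans (map_zero_of_smul e hs).symm))

lemma span_pull (e : M → N) (hinj : Function.Injective e)
    (hs : ∀ (c : k) (x : M), e (c • x) = c • e x)
    (g₀ : N) (hspan : ∀ y : N, ∃ c : k, y = c • g₀) :
    ∀ x y : M, y ≠ 0 → ∃ c : k, x = c • y := by
  intro x y hy
  obtain ⟨cx, hcx⟩ := hspan (e x)
  obtain ⟨cy, hcy⟩ := hspan (e y)
  have hcy0 : cy ≠ 0 := by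
    intro h
    rw [h, zero_smul] at hcy
    exact map_ne_zero_of_smul e hinj hs hy hcy
  refine ⟨cx / cy, hinj ?_⟩
  rw [hs, hcx, hcy, smul_smul]
  congr 1
  field_simp

lemma smul_cancel {c : k} {u : M} (hu : u ≠ 0) (h : c • u = 0) : c = 0 := by
  by_contra hc
  exact hu (by
    have := congrArg (fun z => c⁻¹ • z) h
    simpa [smul_smul, inv_mul_cancel₀ hc] using this)

end Span

section Cover
variable {k : Type u} [Field k]
variable [Abelian C] [CategoryTheory.Linear k C]

lemma iso_of_cover {T PP U : C} (f : T ⟶ PP) [Epi f]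
    (hwf : WellFoundedLT (Subobject (kernel f)))
    (s : PP ⟶ T) (hs : s ≫ f = 𝟙 PP)
    (u : U ⟶ PP) (hu : u ≠ 0)
    (hsoc : ∀ (S : C), Simple S → ∀ m : S ⟶ T, m ≠ 0 → Nonempty (S ≅ U))
    (hspan : ∀ x y : (U ⟶ T), y ≠ 0 → ∃ c : k, x = c • y) :
    IsIso f := by
  have hker : kernel.ι f = 0 := by
    by_contra hne
    have hKnz : ¬ IsZero (kernel f) := fun hz => hne (hz.eq_of_src _ _)
    haveI : IsArtinianObject (kernel f) := by
      dsimp only [IsArtinianObject]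
      rw [ObjectProperty.is_iff, isArtinianObject]; exact hwf
    obtain ⟨Y, hY⟩ := exists_simple_subobject hKnz
    haveI := hY
    haveI hmono : Mono (Y.arrow ≫ kernel.ι f) := mono_comp _ _
    have hm0 : (Y.arrow ≫ kernel.ι f) ≠ 0 :=
      mono_ne_zero _ (Simple.not_isZero _)
    obtain ⟨eS⟩ := hsoc _ hY _ hm0
    set φ := eS.inv ≫ Y.arrow ≫ kernel.ι f with hφ
    have hφ0 : φ ≠ 0 := comp_ne_zero_of_isIso_left _ _ hm0
    have hφf : φ ≫ f = 0 := by
      rw [hφ]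
      simp only [Category.assoc, kernel.condition, comp_zero]
    set ψ := u ≫ s with hψ
    have hψf : ψ ≫ f = u := by rw [hψ, Category.assoc, hs, Category.comp_id]
    have hψ0 : ψ ≠ 0 := by intro h; apply hu; rw [← hψf, h, zero_comp]
    obtain ⟨c, hc⟩ := hspan φ ψ hψ0
    have hzz : (0 : U ⟶ PP) = c • u := by rw [← hφf, hc, Linear.smul_comp, hψf]
    have hc0 : c = 0 := smul_cancel hu hzz.symm
    rw [hc0, zero_smul] at hc
    exact hφ0 hc
  haveI : Mono f := Abelian.mono_of_kernel_ι_eq_zero f hker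
  exact isIso_of_mono_of_epi f

end Cover

section MoreLinear
variable (k : Type u) [Field k]
variable [Preadditive C] [CategoryTheory.Linear k C] [MonoidalPreadditive C] [MonoidalLinear k C]

lemma equiv_symm_smul {M N : Type*} [AddCommGroup M] [Module k M] [AddCommGroup N] [Module k N]
    (e : M ≃ N) (hs : ∀ (c : k) (x : M), e (c • x) = c • e x) (c : k) (y : N) :
    e.symm (c • y) = c • e.symm y :=
  e.injective (by rw [Equiv.apply_symm_apply, hs, Equiv.apply_symm_apply])

include k in
lemma tlhe_ne {X Y Y' Z : C} [ExactPairing Y Y'] {f : Y' ⊗ X ⟶ Z} (hf : f ≠ 0) :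
    (tensorLeftHomEquiv X Y Y' Z) f ≠ 0 :=
  map_ne_zero_of_smul _ (Equiv.injective _) (fun c x => tlhe_smul k c x) hf

include k in
lemma tlhe_symm_ne {X Y Y' Z : C} [ExactPairing Y Y'] {f : X ⟶ Y ⊗ Z} (hf : f ≠ 0) :
    (tensorLeftHomEquiv X Y Y' Z).symm f ≠ 0 :=
  map_ne_zero_of_smul _ (Equiv.injective _) (fun c x => tlhe_symm_smul k c x) hf

include k in
lemma trhe_ne {X Y Y' Z : C} [ExactPairing Y Y'] {f : X ⊗ Y ⟶ Z} (hf : f ≠ 0) :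
    (tensorRightHomEquiv X Y Y' Z) f ≠ 0 :=
  map_ne_zero_of_smul _ (Equiv.injective _) (fun c x => trhe_smul k c x) hf

include k in
lemma trhe_symm_ne {X Y Y' Z : C} [ExactPairing Y Y'] {f : X ⟶ Z ⊗ Y'} (hf : f ≠ 0) :
    (tensorRightHomEquiv X Y Y' Z).symm f ≠ 0 :=
  map_ne_zero_of_smul _ (Equiv.injective _) (fun c x => trhe_symm_smul k c x) hf

include k in
lemma D2_ne {A B : C} [HasRightDual B] [HasLeftDual A] {f : A ⟶ (Bᘁ : C)} (hf : f ≠ 0) :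
    D2 A B f ≠ 0 :=
  map_ne_zero_of_smul _ (Equiv.injective _) (fun c x => D2_smul k c x) hf

include k in
lemma D2_symm_ne {A B : C} [HasRightDual B] [HasLeftDual A] {f : B ⟶ (ᘁA : C)} (hf : f ≠ 0) :
    (D2 A B).symm f ≠ 0 :=
  map_ne_zero_of_smul _ (Equiv.injective _)
    (fun c x => equiv_symm_smul k (D2 A B) (fun c x => D2_smul k c x) c x) hf

end MoreLinear

end Monoidal
end DOI

open DOI

set_option maxHeartbeats 2000000 in
/-- The distinguished invertible object.  Let `L i` be a complete family of pairwise
non-isomorphic simple objects of a finite tensor category `C`, with projective covers `P i`,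
let `D : ι → ι` be the bijection determined by `(P i)ᘁ ≅ P (D i)`, and let `i0` be the label
of the unit object.  Then the simple object `L (D i0)` is invertible:
`L ρ ⊗ (L ρ)ᘁ ≅ 𝟙 ≅ (L ρ)ᘁ ⊗ L ρ` where `ρ = D i0`. -/
theorem distinguished_object_invertible {k : Type u} {C : Type v} [Field k] [IsAlgClosed k]
    [Category.{w} C] [Abelian C] [CategoryTheory.Linear k C] [MonoidalCategory C]
    [MonoidalPreadditive C] [MonoidalLinear k C] [RigidCategory C]
    [FiniteTensorCategory k C]
    {ι : Type} [Fintype ι]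
    (L : ι → C) (hL : ∀ i, Simple (L i))
    (hLall : ∀ X : C, Simple X → ∃ i, Nonempty (X ≅ L i))
    (hLdist : ∀ i j, Nonempty (L i ≅ L j) → i = j)
    (P : ι → C)
    (hP : ∀ i, Projective (P i) ∧ ∃ f : P i ⟶ L i, Epi f ∧
      ∀ (R : C) (g : R ⟶ P i), Epi (g ≫ f) → Epi g)
    (D : ι → ι) (hDbij : Function.Bijective D)
    (hD : ∀ i, Nonempty ((P i)ᘁ ≅ P (D i)))
    (i0 : ι) (hi0 : Nonempty (L i0 ≅ 𝟙_ C)) :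
    Nonempty ((L (D i0) ⊗ (L (D i0))ᘁ) ≅ 𝟙_ C) ∧
    Nonempty (((L (D i0))ᘁ ⊗ L (D i0)) ≅ 𝟙_ C) := by
    classical
  obtain ⟨e0⟩ := hi0
  haveI hLs : ∀ i, Simple (L i) := hL
  haveI hsU : Simple (𝟙_ C) := Simple.of_iso e0.symm
  have hPproj : ∀ i, Projective (P i) := fun i => (hP i).1
  haveI := hPproj
  choose p hpE hpC using fun i => (hP i).2
  haveI := hpE
  have hwfLT : ∀ X : C, WellFoundedLT (Subobject X) :=
    fun X => (FiniteTensorCategory.finiteLength (k := k) X).2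
  have hwfGT : ∀ X : C, WellFoundedGT (Subobject X) :=
    fun X => (FiniteTensorCategory.finiteLength (k := k) X).1
  haveI hFD : ∀ X Y : C, FiniteDimensional k (X ⟶ Y) :=
    FiniteTensorCategory.homFinite
  have hLnz : ∀ i, ¬ IsZero (L i) := fun i => Simple.not_isZero _
  have hUnz : ¬ IsZero (𝟙_ C) := Simple.not_isZero _
  have hp0 : ∀ i, p i ≠ 0 := fun i => DOI.epi_ne_zero (p i) (hLnz i)
  -- Lemma A: hom spaces from covers to simples
  have lemA : ∀ i j (q : P i ⟶ L j), q ≠ 0 → ∃ r : L j ⟶ L i, q ≫ r = p i ∧ r ≠ 0 := by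
    intro i j q hq
    haveI : Epi q := epi_of_nonzero_to_simple hq
    have hk : kernel.ι q ≫ p i = 0 := by
      by_contra hkne
      haveI : Epi (kernel.ι q ≫ p i) := epi_of_nonzero_to_simple hkne
      haveI : Epi (kernel.ι q) := hpC i _ _ (by infer_instance)
      haveI : IsIso (kernel.ι q) := isIso_of_mono_of_epi _
      refine hq ((cancel_epi (kernel.ι q)).mp ?_)
      simp [kernel.condition]
    refine ⟨Abelian.epiDesc q (p i) hk, Abelian.comp_epiDesc q (p i) hk, ?_⟩
    intro hr
    apply hp0 i
    rw [← Abelian.comp_epiDesc q (p i) hk, hr, comp_zero]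
  have lemA_ne : ∀ i j (q : P i ⟶ L j), q ≠ 0 → i = j := by
    intro i j q hq
    obtain ⟨r, _, hr0⟩ := lemA i j q hq
    haveI : IsIso r := isIso_of_hom_simple hr0
    exact (hLdist j i ⟨asIso r⟩).symm
  have lemA_span : ∀ i (q : P i ⟶ L i), ∃ c : k, q = c • p i := by
    intro i q
    by_cases hq : q = 0
    · exact ⟨0, by rw [hq, zero_smul]⟩
    obtain ⟨r, hqr, hr0⟩ := lemA i i q hq
    haveI : FiniteDimensional k (L i ⟶ L i) := hFD _ _
    obtain ⟨c, hc⟩ := endomorphism_simple_eq_smul_id k r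
    have hc0 : c ≠ 0 := by
      intro h; rw [h, zero_smul] at hc; exact hr0 hc.symm
    refine ⟨c⁻¹, ?_⟩
    have h2 : q ≫ (c • 𝟙 (L i)) = p i := by rw [hc, hqr]
    rw [Linear.comp_smul, Category.comp_id] at h2
    rw [← h2, smul_smul, inv_mul_cancel₀ hc0, one_smul]
  have lemA_ne'' : ∀ i (S : C), Simple S → ∀ q : P i ⟶ S, q ≠ 0 → Nonempty (S ≅ L i) := by
    intro i S hS q hq
    haveI := hS
    obtain ⟨m, ⟨eS⟩⟩ := hLall S hS
    have him : i = m := lemA_ne i m (q ≫ eS.hom) (DOI.comp_ne_zero_of_isIso_right _ _ hq)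
    subst him
    exact ⟨eS⟩
  -- cover of the unit object
  set q0 : P i0 ⟶ 𝟙_ C := p i0 ≫ e0.hom with hq0def
  haveI : Epi q0 := epi_comp _ _
  have hq00 : q0 ≠ 0 := DOI.epi_ne_zero q0 hUnz
  have hq0cover : ∀ (R : C) (g : R ⟶ P i0), Epi (g ≫ q0) → Epi g := by
    intro R g hg
    apply hpC i0
    have h1 : g ≫ p i0 = (g ≫ q0) ≫ e0.inv := by
      rw [hq0def]; simp
    rw [h1]
    haveI := hg
    exact epi_comp _ _
  obtain ⟨e0d⟩ := hD i0
  obtain ⟨eDd⟩ := hD (D i0)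
  -- u : 𝟙 ⟶ P (D i0), the "socle" map of P (D i0)
  set Eu : (P i0 ⟶ 𝟙_ C) ≃ (𝟙_ C ⟶ P (D i0)) :=
    ((Iso.homCongr (λ_ (P i0)).symm (Iso.refl (𝟙_ C))).trans
      (tensorRightHomEquiv (𝟙_ C) (P i0) ((P i0)ᘁ) (𝟙_ C))).trans
      (Iso.homCongr (Iso.refl (𝟙_ C)) ((λ_ ((P i0)ᘁ : C)) ≪≫ e0d)) with hEu
  have hEusmul : ∀ (c : k) x, Eu (c • x) = c • Eu x := by
    intro c x
    rw [hEu]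
    simp only [Equiv.trans_apply]
    rw [homCongr_smul k, trhe_smul k, homCongr_smul k]
  set u : 𝟙_ C ⟶ P (D i0) := Eu q0 with hudef
  have hu0 : u ≠ 0 := map_ne_zero_of_smul Eu Eu.injective hEusmul hq00
  -- Stage 1 : T = P i0 ⊗ L (D i0)
  haveI : Projective (P i0 ⊗ L (D i0)) := DOI.projective_tensorRight _ _
  haveI : Epi (q0 ▷ L (D i0)) := DOI.epi_whiskerRight_of _ _
  set t1 : P i0 ⊗ L (D i0) ⟶ L (D i0) := (q0 ▷ L (D i0)) ≫ (λ_ (L (D i0))).hom with ht1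
  haveI : Epi t1 := epi_comp _ _
  set f1 : P i0 ⊗ L (D i0) ⟶ P (D i0) := Projective.factorThru t1 (p (D i0)) with hf1
  have hf1c : f1 ≫ p (D i0) = t1 := Projective.factorThru_comp _ _
  haveI hf1e : Epi f1 := hpC (D i0) _ f1 (by rw [hf1c]; infer_instance)
  set s1 : P (D i0) ⟶ P i0 ⊗ L (D i0) := Projective.factorThru (𝟙 _) f1 with hs1
  have hs1c : s1 ≫ f1 = 𝟙 _ := Projective.factorThru_comp _ _
  set ψ1 : 𝟙_ C ⟶ P i0 ⊗ L (D i0) := u ≫ s1 with hψ1def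
  have hψ1f : ψ1 ≫ f1 = u := by rw [hψ1def, Category.assoc, hs1c, Category.comp_id]
  have hψ1 : ψ1 ≠ 0 := fun h => hu0 (by rw [← hψ1f, h, zero_comp])
  -- socle of T
  have socle1 : ∀ (S : C), Simple S → ∀ m : S ⟶ P i0 ⊗ L (D i0), m ≠ 0 →
      Nonempty (S ≅ L (D (D i0))) := by
    intro S hS m hm
    haveI := hS
    have a1 : (tensorLeftHomEquiv S (P i0) ((P i0)ᘁ) (L (D i0))).symm m ≠ 0 :=
      tlhe_symm_ne k hm
    set a2 : P (D i0) ⊗ S ⟶ L (D i0) :=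
      (whiskerRightIso e0d S).inv ≫ (tensorLeftHomEquiv S (P i0) ((P i0)ᘁ) (L (D i0))).symm m
      with ha2def
    have ha2 : a2 ≠ 0 := DOI.comp_ne_zero_of_isIso_left _ _ a1
    haveI : Epi a2 := epi_of_nonzero_to_simple ha2
    haveI : Projective (P (D i0) ⊗ S) := DOI.projective_tensorRight _ _
    set h1 : P (D i0) ⊗ S ⟶ P (D i0) := Projective.factorThru a2 (p (D i0)) with hh1
    have h1c : h1 ≫ p (D i0) = a2 := Projective.factorThru_comp _ _
    haveI : Epi h1 := hpC (D i0) _ _ (by rw [h1c]; infer_instance)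
    set σ : P (D i0) ⟶ P (D i0) ⊗ S := Projective.factorThru (𝟙 _) h1 with hσdef
    have hσ : σ ≫ h1 = 𝟙 _ := Projective.factorThru_comp _ _
    have hw1 : u ≫ σ ≠ 0 := by
      intro h
      apply hu0
      rw [← (show (u ≫ σ) ≫ h1 = u by rw [Category.assoc, hσ, Category.comp_id]), h, zero_comp]
    have d1 : (tensorLeftHomEquiv (𝟙_ C) (P (D i0)) ((P (D i0))ᘁ) S).symm (u ≫ σ) ≠ 0 :=
      tlhe_symm_ne k hw1
    have d2 : (eDd.inv ≫ (ρ_ ((P (D i0))ᘁ : C)).inv) ≫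
        ((tensorLeftHomEquiv (𝟙_ C) (P (D i0)) ((P (D i0))ᘁ) S).symm (u ≫ σ)) ≠ 0 :=
      DOI.comp_ne_zero_of_isIso_left _ _ d1
    exact lemA_ne'' (D (D i0)) S hS _ d2
  obtain ⟨eψ⟩ := socle1 (𝟙_ C) hsU ψ1 hψ1
  have hDD : D (D i0) = i0 := hLdist (D (D i0)) i0 ⟨eψ.symm ≪≫ e0.symm⟩
  -- span of Hom(𝟙, T)
  set E1span : (𝟙_ C ⟶ P i0 ⊗ L (D i0)) ≃ (P (D i0) ⟶ L (D i0)) :=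
    (((tensorLeftHomEquiv (𝟙_ C) (P i0) ((P i0)ᘁ) (L (D i0))).symm).trans
      (Iso.homCongr (ρ_ ((P i0)ᘁ : C)) (Iso.refl _))).trans
      (Iso.homCongr e0d (Iso.refl _)) with hE1
  have hE1smul : ∀ (c : k) x, E1span (c • x) = c • E1span x := by
    intro c x
    rw [hE1]
    simp only [Equiv.trans_apply]
    rw [tlhe_symm_smul k, homCongr_smul k, homCongr_smul k]
  have span1 : ∀ x y : (𝟙_ C ⟶ P i0 ⊗ L (D i0)), y ≠ 0 → ∃ c : k, x = c • y :=
    DOI.span_pull E1span E1span.injective hE1smul (p (D i0)) (lemA_span (D i0))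
  have hsoc1 : ∀ S, Simple S → ∀ m : S ⟶ P i0 ⊗ L (D i0), m ≠ 0 → Nonempty (S ≅ 𝟙_ C) :=
    fun S hS m hm => (socle1 S hS m hm).elim (fun e => ⟨e ≪≫ eψ.symm⟩)
  haveI hθiso : IsIso f1 :=
    DOI.iso_of_cover (k := k) f1 (hwfLT _) s1 hs1c u hu0 hsoc1 span1
  set θ : P i0 ⊗ L (D i0) ≅ P (D i0) := asIso f1 with hθ
  -- Stage 2 : T' = L (D i0) ⊗ P i0
  set eρd' : ((P (D i0))ᘁ : C) ≅ P i0 := eDd ≪≫ eqToIso (congrArg P hDD) with heρd'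
  set icL0 : ((ᘁ(P i0) : C)) ≅ P (D i0) := dLeft eρd' ≪≫ lrIso (P (D i0)) with hicL0
  set icL2 : ((ᘁ(P (D i0)) : C)) ≅ P i0 := dLeft e0d ≪≫ lrIso (P i0) with hicL2
  haveI : Projective (L (D i0) ⊗ P i0) := DOI.projective_tensorLeft _ _
  haveI : Epi (L (D i0) ◁ q0) := DOI.epi_whiskerLeft_of _ _
  set t2 : L (D i0) ⊗ P i0 ⟶ L (D i0) := (L (D i0) ◁ q0) ≫ (ρ_ (L (D i0))).hom with ht2
  haveI : Epi t2 := epi_comp _ _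
  set f2 : L (D i0) ⊗ P i0 ⟶ P (D i0) := Projective.factorThru t2 (p (D i0)) with hf2
  have hf2c : f2 ≫ p (D i0) = t2 := Projective.factorThru_comp _ _
  haveI hf2e : Epi f2 := hpC (D i0) _ f2 (by rw [hf2c]; infer_instance)
  set s2 : P (D i0) ⟶ L (D i0) ⊗ P i0 := Projective.factorThru (𝟙 _) f2 with hs2
  have hs2c : s2 ≫ f2 = 𝟙 _ := Projective.factorThru_comp _ _
  set E2span : (𝟙_ C ⟶ L (D i0) ⊗ P i0) ≃ (P (D i0) ⟶ L (D i0)) :=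
    (((tensorRightHomEquiv (𝟙_ C) ((ᘁ(P i0) : C)) (P i0) (L (D i0))).symm).trans
      (Iso.homCongr (λ_ ((ᘁ(P i0) : C))) (Iso.refl _))).trans
      (Iso.homCongr icL0 (Iso.refl _)) with hE2
  have hE2smul : ∀ (c : k) x, E2span (c • x) = c • E2span x := by
    intro c x
    rw [hE2]
    simp only [Equiv.trans_apply]
    rw [trhe_symm_smul k, homCongr_smul k, homCongr_smul k]
  have span2 : ∀ x y : (𝟙_ C ⟶ L (D i0) ⊗ P i0), y ≠ 0 → ∃ c : k, x = c • y :=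
    DOI.span_pull E2span E2span.injective hE2smul (p (D i0)) (lemA_span (D i0))
  have socle2 : ∀ (S : C), Simple S → ∀ m : S ⟶ L (D i0) ⊗ P i0, m ≠ 0 →
      Nonempty (S ≅ 𝟙_ C) := by
    intro S hS m hm
    haveI := hS
    have b1 : (tensorLeftHomEquiv S (L (D i0)) ((L (D i0))ᘁ) (P i0)).symm m ≠ 0 :=
      tlhe_symm_ne k hm
    have b2 : ((tensorLeftHomEquiv S (L (D i0)) ((L (D i0))ᘁ) (P i0)).symm m) ≫ eρd'.inv ≠ 0 :=
      DOI.comp_ne_zero_of_isIso_right _ _ b1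
    have b3 : D2 (((L (D i0))ᘁ : C) ⊗ S) (P (D i0))
        (((tensorLeftHomEquiv S (L (D i0)) ((L (D i0))ᘁ) (P i0)).symm m) ≫ eρd'.inv) ≠ 0 :=
      D2_ne k b2
    set b3' := D2 (((L (D i0))ᘁ : C) ⊗ S) (P (D i0))
        (((tensorLeftHomEquiv S (L (D i0)) ((L (D i0))ᘁ) (P i0)).symm m) ≫ eρd'.inv) with hb3'
    set wiso : ((ᘁ(((L (D i0))ᘁ : C) ⊗ S) : C)) ≅ ((ᘁS : C) ⊗ L (D i0)) :=
      dualTensorLeftIso ((L (D i0))ᘁ : C) S ≪≫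
        whiskerLeftIso (ᘁS : C) (lrIso (L (D i0))) with hwiso
    have b5 : b3' ≫ wiso.hom ≠ 0 := DOI.comp_ne_zero_of_isIso_right _ _ b3
    have b6 : (tensorLeftHomEquiv (P (D i0)) ((ᘁS : C)) (((ᘁS : C))ᘁ) (L (D i0))).symm
        (b3' ≫ wiso.hom) ≠ 0 := tlhe_symm_ne k b5
    set b7 : S ⊗ P (D i0) ⟶ L (D i0) := (whiskerRightIso (rlIso S).symm (P (D i0))).hom ≫
      (tensorLeftHomEquiv (P (D i0)) ((ᘁS : C)) (((ᘁS : C))ᘁ) (L (D i0))).symm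
        (b3' ≫ wiso.hom) with hb7
    have hb70 : b7 ≠ 0 := DOI.comp_ne_zero_of_isIso_left _ _ b6
    haveI : Epi b7 := epi_of_nonzero_to_simple hb70
    haveI : Projective (S ⊗ P (D i0)) := DOI.projective_tensorLeft _ _
    set h2 : S ⊗ P (D i0) ⟶ P (D i0) := Projective.factorThru b7 (p (D i0)) with hh2
    have h2c : h2 ≫ p (D i0) = b7 := Projective.factorThru_comp _ _
    haveI : Epi h2 := hpC (D i0) _ _ (by rw [h2c]; infer_instance)
    set σ2 : P (D i0) ⟶ S ⊗ P (D i0) := Projective.factorThru (𝟙 _) h2 with hσ2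
    have hσ2c : σ2 ≫ h2 = 𝟙 _ := Projective.factorThru_comp _ _
    have hw2 : u ≫ σ2 ≠ 0 := by
      intro h
      apply hu0
      rw [← (show (u ≫ σ2) ≫ h2 = u by rw [Category.assoc, hσ2c, Category.comp_id]), h, zero_comp]
    have c1 : (tensorRightHomEquiv (𝟙_ C) ((ᘁ(P (D i0)) : C)) (P (D i0)) S).symm (u ≫ σ2) ≠ 0 :=
      trhe_symm_ne k hw2
    have c3 : (icL2.inv ≫ (λ_ ((ᘁ(P (D i0)) : C))).inv) ≫
        ((tensorRightHomEquiv (𝟙_ C) ((ᘁ(P (D i0)) : C)) (P (D i0)) S).symm (u ≫ σ2)) ≠ 0 :=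
      DOI.comp_ne_zero_of_isIso_left _ _ c1
    obtain ⟨eSi⟩ := lemA_ne'' i0 S hS _ c3
    exact ⟨eSi ≪≫ e0⟩
  haveI hθ2iso : IsIso f2 :=
    DOI.iso_of_cover (k := k) f2 (hwfLT _) s2 hs2c u hu0 socle2 span2
  set θ2 : L (D i0) ⊗ P i0 ≅ P (D i0) := asIso f2 with hθ2
  -- Stage 3 : T3 = (L (D i0))ᘁ ⊗ P (D i0)
  have hev0 : ε_ (L (D i0)) ((L (D i0))ᘁ) ≠ 0 := DOI.ev_ne_zero _ _ (hLnz (D i0))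
  haveI : Epi (ε_ (L (D i0)) ((L (D i0))ᘁ)) := epi_of_nonzero_to_simple hev0
  haveI : Projective (((L (D i0))ᘁ : C) ⊗ P (D i0)) := DOI.projective_tensorLeft _ _
  haveI : Epi (((L (D i0))ᘁ : C) ◁ p (D i0)) := DOI.epi_whiskerLeft_of _ _
  set t3 : ((L (D i0))ᘁ : C) ⊗ P (D i0) ⟶ 𝟙_ C :=
    (((L (D i0))ᘁ : C) ◁ p (D i0)) ≫ ε_ (L (D i0)) ((L (D i0))ᘁ) with ht3
  haveI : Epi t3 := epi_comp _ _
  set f3 : ((L (D i0))ᘁ : C) ⊗ P (D i0) ⟶ P i0 := Projective.factorThru t3 q0 with hf3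
  have hf3c : f3 ≫ q0 = t3 := Projective.factorThru_comp _ _
  haveI hf3e : Epi f3 := hq0cover _ f3 (by rw [hf3c]; infer_instance)
  set s3 : P i0 ⟶ ((L (D i0))ᘁ : C) ⊗ P (D i0) := Projective.factorThru (𝟙 _) f3 with hs3
  have hs3c : s3 ≫ f3 = 𝟙 _ := Projective.factorThru_comp _ _
  -- the socle map u0 : (L (D i0))ᘁ ⟶ P i0
  have hstart : p (D i0) ≫ (lrIso (L (D i0))).inv ≠ 0 :=
    DOI.comp_ne_zero_of_isIso_right _ _ (hp0 (D i0))
  have hv1 : (D2 ((L (D i0))ᘁ : C) (P (D i0))).symm (p (D i0) ≫ (lrIso (L (D i0))).inv) ≠ 0 :=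
    D2_symm_ne k hstart
  set u0 : ((L (D i0))ᘁ : C) ⟶ P i0 :=
    ((D2 ((L (D i0))ᘁ : C) (P (D i0))).symm (p (D i0) ≫ (lrIso (L (D i0))).inv)) ≫ eρd'.hom
    with hu0def
  have hu00 : u0 ≠ 0 := DOI.comp_ne_zero_of_isIso_right _ _ hv1
  -- socle of T3
  have socle3 : ∀ (S : C), Simple S → ∀ m : S ⟶ ((L (D i0))ᘁ : C) ⊗ P (D i0), m ≠ 0 →
      Nonempty (S ≅ ((L (D i0))ᘁ : C)) := by
    intro S hS m hm
    haveI := hS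
    have a1 : (tensorLeftHomEquiv S ((L (D i0))ᘁ : C) (((L (D i0))ᘁ : C)ᘁ) (P (D i0))).symm m
        ≠ 0 := tlhe_symm_ne k hm
    have a2 : ((tensorLeftHomEquiv S ((L (D i0))ᘁ : C) (((L (D i0))ᘁ : C)ᘁ)
        (P (D i0))).symm m) ≫ e0d.inv ≠ 0 := DOI.comp_ne_zero_of_isIso_right _ _ a1
    set a3 := D2 ((((L (D i0))ᘁ : C)ᘁ : C) ⊗ S) (P i0)
      (((tensorLeftHomEquiv S ((L (D i0))ᘁ : C) (((L (D i0))ᘁ : C)ᘁ)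
        (P (D i0))).symm m) ≫ e0d.inv) with ha3
    have ha30 : a3 ≠ 0 := D2_ne k a2
    set wiso3 : ((ᘁ((((L (D i0))ᘁ : C)ᘁ : C) ⊗ S) : C)) ≅ ((ᘁS : C) ⊗ ((L (D i0))ᘁ : C)) :=
      dualTensorLeftIso (((L (D i0))ᘁ : C)ᘁ : C) S ≪≫
        whiskerLeftIso (ᘁS : C) (lrIso ((L (D i0))ᘁ : C)) with hwiso3
    have a5 : a3 ≫ wiso3.hom ≠ 0 := DOI.comp_ne_zero_of_isIso_right _ _ ha30
    have a6 : (tensorRightHomEquiv (P i0) (L (D i0)) ((L (D i0))ᘁ) ((ᘁS : C))).symm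
        (a3 ≫ wiso3.hom) ≠ 0 := trhe_symm_ne k a5
    have a7 : θ.inv ≫ ((tensorRightHomEquiv (P i0) (L (D i0)) ((L (D i0))ᘁ)
        ((ᘁS : C))).symm (a3 ≫ wiso3.hom)) ≠ 0 := DOI.comp_ne_zero_of_isIso_left _ _ a6
    haveI : Simple (ᘁS : C) := DOI.simple_leftDual S
    obtain ⟨eDS⟩ := lemA_ne'' (D i0) (ᘁS : C) inferInstance _ a7
    exact ⟨(rlIso S).symm ≪≫ (dRight eDS).symm⟩
  -- span of Hom((L (D i0))ᘁ, T3)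
  set wiso3' : ((ᘁ((((L (D i0))ᘁ : C)ᘁ : C) ⊗ ((L (D i0))ᘁ : C)) : C)) ≅
      (L (D i0) ⊗ ((L (D i0))ᘁ : C)) :=
    dualTensorLeftIso (((L (D i0))ᘁ : C)ᘁ : C) ((L (D i0))ᘁ : C) ≪≫
      whiskerRightIso (lrIso (L (D i0))) ((ᘁ(((L (D i0))ᘁ : C)ᘁ : C) : C)) ≪≫
      whiskerLeftIso (L (D i0)) (lrIso ((L (D i0))ᘁ : C)) with hwiso3'
  set E3span : (((L (D i0))ᘁ : C) ⟶ ((L (D i0))ᘁ : C) ⊗ P (D i0)) ≃ (P (D i0) ⟶ L (D i0)) :=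
    (((((tensorLeftHomEquiv ((L (D i0))ᘁ : C) ((L (D i0))ᘁ : C) (((L (D i0))ᘁ : C)ᘁ)
        (P (D i0))).symm).trans
      (Iso.homCongr (Iso.refl _) e0d.symm)).trans
      (D2 ((((L (D i0))ᘁ : C)ᘁ : C) ⊗ ((L (D i0))ᘁ : C)) (P i0))).trans
      (Iso.homCongr (Iso.refl _) wiso3')).trans
      (((tensorRightHomEquiv (P i0) (L (D i0)) ((L (D i0))ᘁ) (L (D i0))).symm).trans
        (Iso.homCongr θ (Iso.refl _))) with hE3
  have hE3smul : ∀ (c : k) x, E3span (c • x) = c • E3span x := by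
    intro c x
    rw [hE3]
    simp only [Equiv.trans_apply]
    rw [tlhe_symm_smul k, homCongr_smul k, D2_smul k, homCongr_smul k, trhe_symm_smul k,
      homCongr_smul k]
  have span3 : ∀ x y : (((L (D i0))ᘁ : C) ⟶ ((L (D i0))ᘁ : C) ⊗ P (D i0)), y ≠ 0 →
      ∃ c : k, x = c • y :=
    DOI.span_pull E3span E3span.injective hE3smul (p (D i0)) (lemA_span (D i0))
  haveI hκiso : IsIso f3 :=
    DOI.iso_of_cover (k := k) f3 (hwfLT _) s3 hs3c u0 hu00 socle3 span3
  set κ : ((L (D i0))ᘁ : C) ⊗ P (D i0) ≅ P i0 := asIso f3 with hκ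
  -- Goal 1 : the coevaluation is an isomorphism
  have hcoev0 : η_ (L (D i0)) ((L (D i0))ᘁ) ≠ 0 := DOI.coev_ne_zero _ _ (hLnz (D i0))
  haveI : Mono (η_ (L (D i0)) ((L (D i0))ᘁ)) := mono_of_nonzero_from_simple hcoev0
  haveI : Mono (η_ (L (D i0)) ((L (D i0))ᘁ) ▷ P (D i0)) := DOI.mono_whiskerRight_of _ _
  set endo1 : P (D i0) ⟶ P (D i0) :=
    (λ_ (P (D i0))).inv ≫ (η_ (L (D i0)) ((L (D i0))ᘁ) ▷ P (D i0)) ≫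
      (α_ (L (D i0)) ((L (D i0))ᘁ : C) (P (D i0))).hom ≫ (L (D i0) ◁ κ.hom) ≫ θ2.hom
    with hendo1
  haveI : Mono endo1 := by rw [hendo1]; infer_instance
  haveI : IsIso endo1 := DOI.isIso_of_mono_endo (hwfLT _) endo1
  haveI : IsIso (η_ (L (D i0)) ((L (D i0))ᘁ) ▷ P (D i0)) := by
    have h : η_ (L (D i0)) ((L (D i0))ᘁ) ▷ P (D i0) =
        (λ_ (P (D i0))).hom ≫ endo1 ≫ θ2.inv ≫ (L (D i0) ◁ κ.inv) ≫
          (α_ (L (D i0)) ((L (D i0))ᘁ : C) (P (D i0))).inv := by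
      rw [hendo1]; simp
    rw [h]; infer_instance
  have hπ : cokernel.π (η_ (L (D i0)) ((L (D i0))ᘁ)) = 0 := by
    have h1 : (η_ (L (D i0)) ((L (D i0))ᘁ) ▷ P (D i0)) ≫
        (cokernel.π (η_ (L (D i0)) ((L (D i0))ᘁ)) ▷ P (D i0)) = 0 := by
      rw [← comp_whiskerRight, cokernel.condition, MonoidalPreadditive.zero_whiskerRight]
    have h2 : cokernel.π (η_ (L (D i0)) ((L (D i0))ᘁ)) ▷ P (D i0) = 0 := by
      have h3 := congrArg (fun z => inv (η_ (L (D i0)) ((L (D i0))ᘁ) ▷ P (D i0)) ≫ z) h1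
      simpa using h3
    have h4 := whisker_exchange (cokernel.π (η_ (L (D i0)) ((L (D i0))ᘁ))) u
    rw [h2, comp_zero] at h4
    haveI : Mono u := mono_of_nonzero_from_simple hu0
    haveI : Mono (cokernel (η_ (L (D i0)) ((L (D i0))ᘁ)) ◁ u) := DOI.mono_whiskerLeft_of _ _
    have h5 : cokernel.π (η_ (L (D i0)) ((L (D i0))ᘁ)) ▷ 𝟙_ C = 0 := by
      rw [← cancel_mono (cokernel (η_ (L (D i0)) ((L (D i0))ᘁ)) ◁ u)]
      rw [zero_comp]
      exact h4.symm
    calc cokernel.π (η_ (L (D i0)) ((L (D i0))ᘁ))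
        = (ρ_ _).inv ≫ ((ρ_ _).hom ≫ cokernel.π (η_ (L (D i0)) ((L (D i0))ᘁ))) := by simp
      _ = (ρ_ _).inv ≫ ((cokernel.π (η_ (L (D i0)) ((L (D i0))ᘁ)) ▷ 𝟙_ C) ≫ (ρ_ _).hom) := by
          rw [← rightUnitor_naturality]
      _ = 0 := by rw [h5, zero_comp, comp_zero]
  haveI : Epi (η_ (L (D i0)) ((L (D i0))ᘁ)) := Preadditive.epi_of_cokernel_zero hπ
  haveI : IsIso (η_ (L (D i0)) ((L (D i0))ᘁ)) := isIso_of_mono_of_epi _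
  -- Goal 2 : the evaluation is an isomorphism
  haveI : Epi (ε_ (L (D i0)) ((L (D i0))ᘁ) ▷ P i0) := DOI.epi_whiskerRight_of _ _
  set endo2 : P i0 ⟶ P i0 := κ.inv ≫ (((L (D i0))ᘁ : C) ◁ θ2.inv) ≫
    (α_ ((L (D i0))ᘁ : C) (L (D i0)) (P i0)).inv ≫ (ε_ (L (D i0)) ((L (D i0))ᘁ) ▷ P i0) ≫
      (λ_ (P i0)).hom with hendo2
  haveI : Epi endo2 := by rw [hendo2]; infer_instance
  haveI : IsIso endo2 := DOI.isIso_of_epi_endo (hwfGT _) endo2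
  haveI : IsIso (ε_ (L (D i0)) ((L (D i0))ᘁ) ▷ P i0) := by
    have h : ε_ (L (D i0)) ((L (D i0))ᘁ) ▷ P i0 =
        (α_ ((L (D i0))ᘁ : C) (L (D i0)) (P i0)).hom ≫ (((L (D i0))ᘁ : C) ◁ θ2.hom) ≫
          κ.hom ≫ endo2 ≫ (λ_ (P i0)).inv := by
      rw [hendo2]; simp
    rw [h]; infer_instance
  have hι : kernel.ι (ε_ (L (D i0)) ((L (D i0))ᘁ)) = 0 := by
    have h1 : (kernel.ι (ε_ (L (D i0)) ((L (D i0))ᘁ)) ▷ P i0) ≫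
        (ε_ (L (D i0)) ((L (D i0))ᘁ) ▷ P i0) = 0 := by
      rw [← comp_whiskerRight, kernel.condition, MonoidalPreadditive.zero_whiskerRight]
    have h2 : kernel.ι (ε_ (L (D i0)) ((L (D i0))ᘁ)) ▷ P i0 = 0 := by
      have h3 := congrArg (fun z => z ≫ inv (ε_ (L (D i0)) ((L (D i0))ᘁ) ▷ P i0)) h1
      simpa using h3
    have h4 := whisker_exchange (kernel.ι (ε_ (L (D i0)) ((L (D i0))ᘁ))) q0
    rw [h2, zero_comp] at h4
    haveI : Epi (kernel (ε_ (L (D i0)) ((L (D i0))ᘁ)) ◁ q0) := DOI.epi_whiskerLeft_of _ _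
    have h5 : kernel.ι (ε_ (L (D i0)) ((L (D i0))ᘁ)) ▷ 𝟙_ C = 0 := by
      rw [← cancel_epi (kernel (ε_ (L (D i0)) ((L (D i0))ᘁ)) ◁ q0)]
      rw [comp_zero]
      exact h4
    calc kernel.ι (ε_ (L (D i0)) ((L (D i0))ᘁ))
        = (ρ_ _).inv ≫ ((ρ_ _).hom ≫ kernel.ι (ε_ (L (D i0)) ((L (D i0))ᘁ))) := by simp
      _ = (ρ_ _).inv ≫ ((kernel.ι (ε_ (L (D i0)) ((L (D i0))ᘁ)) ▷ 𝟙_ C) ≫ (ρ_ _).hom) := by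
          rw [← rightUnitor_naturality]
      _ = 0 := by rw [h5, zero_comp, comp_zero]
  haveI : Mono (ε_ (L (D i0)) ((L (D i0))ᘁ)) := Abelian.mono_of_kernel_ι_eq_zero _ hι
  haveI : IsIso (ε_ (L (D i0)) ((L (D i0))ᘁ)) := isIso_of_mono_of_epi _
  exact ⟨⟨(asIso (η_ (L (D i0)) ((L (D i0))ᘁ))).symm⟩, ⟨asIso (ε_ (L (D i0)) ((L (D i0))ᘁ))⟩⟩
end

section
/- (Categorical Lorenz theorem) Let C be a finite tensor category over an algebraically closed field k which is not semisimple and which admits an isomorphism of additive functors u: Id → (−)** (for example, any non-semisimple braided finite tensor category). Then the Cartan matrix C_{ij} = [P_i : L_j] of C, viewed as a matrix over the ground field k, is degenerate (i.e. its determinant vanishes in k). -/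
open CategoryTheory MonoidalCategory Limits

universe u v w

open ZeroObject

set_option linter.unusedVariables false
set_option linter.unusedSectionVars false

namespace CartanAux

variable {C : Type v} [Category.{w} C] [MonoidalCategory C]

lemma whiskerLeft_mono' (W : C) [HasRightDual W] {X Y : C} (f : X ⟶ Y) [Mono f] :
    Mono (W ◁ f) := by
  constructor
  intro T a b h
  have ha := (tensorLeftHomEquiv T W (Wᘁ) X).apply_symm_apply a
  have hb := (tensorLeftHomEquiv T W (Wᘁ) X).apply_symm_apply b
  rw [← ha, ← hb, ← tensorLeftHomEquiv_naturality, ← tensorLeftHomEquiv_naturality] at h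
  have := (tensorLeftHomEquiv T W (Wᘁ) Y).injective h
  rw [cancel_mono] at this
  rw [← ha, ← hb, this]

lemma whiskerLeft_epi' (W : C) [HasLeftDual W] {X Y : C} (f : X ⟶ Y) [Epi f] :
    Epi (W ◁ f) := by
  constructor
  intro T a b h
  have ha := (tensorLeftHomEquiv Y (ᘁW) W T).symm_apply_apply a
  have hb := (tensorLeftHomEquiv Y (ᘁW) W T).symm_apply_apply b
  rw [← ha, ← hb, ← tensorLeftHomEquiv_symm_naturality, ← tensorLeftHomEquiv_symm_naturality] at h
  have := (tensorLeftHomEquiv X (ᘁW) W T).symm.injective h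
  rw [cancel_epi] at this
  rw [← ha, ← hb, this]

lemma whiskerRight_mono' (W : C) [HasLeftDual W] {X Y : C} (f : X ⟶ Y) [Mono f] :
    Mono (f ▷ W) := by
  constructor
  intro T a b h
  have ha := (tensorRightHomEquiv T (ᘁW) W X).apply_symm_apply a
  have hb := (tensorRightHomEquiv T (ᘁW) W X).apply_symm_apply b
  rw [← ha, ← hb, ← tensorRightHomEquiv_naturality, ← tensorRightHomEquiv_naturality] at h
  have := (tensorRightHomEquiv T (ᘁW) W Y).injective h
  rw [cancel_mono] at this
  rw [← ha, ← hb, this]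

lemma whiskerRight_epi' (W : C) [HasRightDual W] {X Y : C} (f : X ⟶ Y) [Epi f] :
    Epi (f ▷ W) := by
  constructor
  intro T a b h
  have ha := (tensorRightHomEquiv Y W (Wᘁ) T).symm_apply_apply a
  have hb := (tensorRightHomEquiv Y W (Wᘁ) T).symm_apply_apply b
  rw [← ha, ← hb, ← tensorRightHomEquiv_symm_naturality, ← tensorRightHomEquiv_symm_naturality] at h
  have := (tensorRightHomEquiv X W (Wᘁ) T).symm.injective h
  rw [cancel_epi] at this
  rw [← ha, ← hb, this]

section Preadd
variable [Preadditive C] [MonoidalPreadditive C]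

lemma rightAdjointMate_zero {X Y : C} [HasRightDual X] [HasRightDual Y] :
    ((0 : X ⟶ Y)ᘁ) = 0 := by
  simp [rightAdjointMate]

lemma tensorLeftHomEquiv_zero (X Y Y' Z : C) [ExactPairing Y Y'] :
    (tensorLeftHomEquiv X Y Y' Z) 0 = 0 := by
  simp [tensorLeftHomEquiv]

lemma tensorLeftHomEquiv_symm_zero (X Y Y' Z : C) [ExactPairing Y Y'] :
    (tensorLeftHomEquiv X Y Y' Z).symm 0 = 0 := by
  simp [tensorLeftHomEquiv]

lemma tensorRightHomEquiv_zero (X Y Y' Z : C) [ExactPairing Y Y'] :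
    (tensorRightHomEquiv X Y Y' Z) 0 = 0 := by
  simp [tensorRightHomEquiv]

lemma tensorRightHomEquiv_symm_zero (X Y Y' Z : C) [ExactPairing Y Y'] :
    (tensorRightHomEquiv X Y Y' Z).symm 0 = 0 := by
  simp [tensorRightHomEquiv]

end Preadd

lemma tensorRightHomEquiv_symm_mate {X Y T Z : C} [HasRightDual X] [HasRightDual Y]
    (f : X ⟶ Y) (g : T ⟶ Z ⊗ (Yᘁ)) :
    (tensorRightHomEquiv T X (Xᘁ) Z).symm (g ≫ (Z ◁ (fᘁ))) =
      (T ◁ f) ≫ (tensorRightHomEquiv T Y (Yᘁ) Z).symm g := by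
  dsimp [tensorRightHomEquiv]
  rw [comp_whiskerRight, Category.assoc, associator_naturality_middle_assoc,
    ← MonoidalCategory.whiskerLeft_comp_assoc, rightAdjointMate_comp_evaluation,
    MonoidalCategory.whiskerLeft_comp_assoc, ← associator_naturality_right_assoc,
    ← whisker_exchange_assoc]

lemma coev_comp_whiskerLeft_eq {X T : C} [HasRightDual X] (g : (Xᘁ) ⟶ T) :
    (tensorLeftHomEquiv (𝟙_ C) X (Xᘁ) T) ((ρ_ (Xᘁ)).hom ≫ g) = η_ X (Xᘁ) ≫ X ◁ g := by
  dsimp [tensorLeftHomEquiv]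
  rw [MonoidalCategory.whiskerLeft_comp, whiskerLeft_rightUnitor]
  simp only [Category.assoc, Iso.hom_inv_id_assoc]
  rw [rightUnitor_naturality_assoc, ← unitors_equal, Iso.inv_hom_id_assoc]

lemma coev_mate {A B T : C} [HasRightDual A] [HasRightDual B] (f : A ⟶ B) (g : (Aᘁ) ⟶ T) :
    η_ B (Bᘁ) ≫ B ◁ ((fᘁ) ≫ g) = (η_ A (Aᘁ) ≫ A ◁ g) ≫ (f ▷ T) := by
  rw [MonoidalCategory.whiskerLeft_comp, ← Category.assoc, coevaluation_comp_rightAdjointMate,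
    Category.assoc, Category.assoc, whisker_exchange]

section Dual

variable [Abelian C] [MonoidalPreadditive C] [RigidCategory C]
variable {A B Cc : C} {i : A ⟶ B} {p : B ⟶ Cc}

lemma mate_comp_zero (hw : i ≫ p = 0) : (pᘁ) ≫ (iᘁ) = 0 := by
  rw [← comp_rightAdjointMate, hw, rightAdjointMate_zero]

lemma whisker_cokernel_desc (T : C) {hw : i ≫ p = 0}
    (hcoker : IsColimit (CokernelCofork.ofπ p hw)) {Z : C}
    (h : T ⊗ B ⟶ Z) (hh : (T ◁ i) ≫ h = 0) :
    ∃ h' : T ⊗ Cc ⟶ Z, (T ◁ p) ≫ h' = h := by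
  set k := (tensorLeftHomEquiv B (ᘁT) T Z) h with hk
  have h0 : i ≫ k = 0 := by
    apply (tensorLeftHomEquiv A (ᘁT) T Z).symm.injective
    rw [tensorLeftHomEquiv_symm_naturality, tensorLeftHomEquiv_symm_zero, hk,
      Equiv.symm_apply_apply, hh]
  obtain ⟨d, hd⟩ := CokernelCofork.IsColimit.desc' hcoker k h0
  refine ⟨(tensorLeftHomEquiv Cc (ᘁT) T Z).symm d, ?_⟩
  rw [← tensorLeftHomEquiv_symm_naturality]
  simp only [Cofork.π_ofπ] at hd
  rw [hd, hk, Equiv.symm_apply_apply]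

lemma mate_kernel_lift {T : C} {hw : i ≫ p = 0}
    (hcoker : IsColimit (CokernelCofork.ofπ p hw))
    (x : T ⟶ (Bᘁ)) (hx : x ≫ (iᘁ) = 0) :
    ∃ y : T ⟶ (Ccᘁ), y ≫ (pᘁ) = x := by
  set x' : T ⟶ 𝟙_ C ⊗ (Bᘁ) := x ≫ (λ_ (Bᘁ)).inv with hx'
  set h := (tensorRightHomEquiv T B (Bᘁ) (𝟙_ C)).symm x' with hh
  have h1 : (T ◁ i) ≫ h = 0 := by
    rw [hh, ← tensorRightHomEquiv_symm_mate]
    have e : x' ≫ (𝟙_ C ◁ (iᘁ)) = 0 := by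
      rw [hx', Category.assoc, ← leftUnitor_inv_naturality, ← Category.assoc, hx, zero_comp]
    rw [e, tensorRightHomEquiv_symm_zero]
  obtain ⟨h', hh'⟩ := whisker_cokernel_desc T hcoker h h1
  refine ⟨(tensorRightHomEquiv T Cc (Ccᘁ) (𝟙_ C)) h' ≫ (λ_ (Ccᘁ)).hom, ?_⟩
  have key : ((tensorRightHomEquiv T Cc (Ccᘁ) (𝟙_ C)) h') ≫ (𝟙_ C ◁ (pᘁ)) = x' := by
    apply (tensorRightHomEquiv T B (Bᘁ) (𝟙_ C)).symm.injective
    rw [tensorRightHomEquiv_symm_mate, Equiv.symm_apply_apply, hh', hh]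
  calc ((tensorRightHomEquiv T Cc (Ccᘁ) (𝟙_ C)) h' ≫ (λ_ (Ccᘁ)).hom) ≫ (pᘁ)
      = (tensorRightHomEquiv T Cc (Ccᘁ) (𝟙_ C)) h' ≫ (𝟙_ C ◁ (pᘁ)) ≫ (λ_ (Bᘁ)).hom := by
        rw [Category.assoc, leftUnitor_naturality]
    _ = x' ≫ (λ_ (Bᘁ)).hom := by rw [← Category.assoc, key]
    _ = x := by rw [hx', Category.assoc, Iso.inv_hom_id, Category.comp_id]

lemma mate_mono_of_epi {hw : i ≫ p = 0}
    (hcoker : IsColimit (CokernelCofork.ofπ p hw)) [Epi p] : Mono (pᘁ) := by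
  apply Preadditive.mono_of_cancel_zero
  intro T a ha
  have h2 : (T ◁ p) ≫ (tensorRightHomEquiv T Cc (Ccᘁ) (𝟙_ C)).symm (a ≫ (λ_ (Ccᘁ)).inv) = 0 := by
    rw [← tensorRightHomEquiv_symm_mate]
    have e : (a ≫ (λ_ (Ccᘁ)).inv) ≫ (𝟙_ C ◁ (pᘁ)) = 0 := by
      rw [Category.assoc, ← leftUnitor_inv_naturality, ← Category.assoc, ha, zero_comp]
    rw [e, tensorRightHomEquiv_symm_zero]
  haveI := whiskerLeft_epi' T p
  have h3 : (tensorRightHomEquiv T Cc (Ccᘁ) (𝟙_ C)).symm (a ≫ (λ_ (Ccᘁ)).inv) = 0 := by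
    rw [← cancel_epi (T ◁ p), comp_zero, h2]
  have h4 : a ≫ (λ_ (Ccᘁ)).inv = 0 := by
    apply (tensorRightHomEquiv T Cc (Ccᘁ) (𝟙_ C)).symm.injective
    rw [h3, tensorRightHomEquiv_symm_zero]
  simpa using congrArg (fun t => t ≫ (λ_ (Ccᘁ)).hom) h4

lemma mate_epi_of_mono {X Y : C} (f : X ⟶ Y) [Mono f] : Epi (fᘁ) := by
  apply Preadditive.epi_of_cancel_zero
  intro T g hg
  have e1 := coev_mate f g
  rw [hg, MonoidalPreadditive.whiskerLeft_zero, comp_zero] at e1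
  haveI := whiskerRight_mono' T f
  have e2 : η_ X (Xᘁ) ≫ X ◁ g = 0 := by
    rw [← cancel_mono (f ▷ T), zero_comp, ← e1]
  have e3 : (ρ_ (Xᘁ)).hom ≫ g = 0 := by
    apply (tensorLeftHomEquiv (𝟙_ C) X (Xᘁ) T).injective
    rw [coev_comp_whiskerLeft_eq, tensorLeftHomEquiv_zero, e2]
  simpa using congrArg (fun t => (ρ_ (Xᘁ)).inv ≫ t) e3

lemma whisker_mate_kernel_lift (W : C) {T : C} {hw : i ≫ p = 0}
    (hcoker : IsColimit (CokernelCofork.ofπ p hw))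
    (x : T ⟶ W ⊗ (Bᘁ)) (hx : x ≫ (W ◁ (iᘁ)) = 0) :
    ∃ y : T ⟶ W ⊗ (Ccᘁ), y ≫ (W ◁ (pᘁ)) = x := by
  set xh := (tensorLeftHomEquiv T W (Wᘁ) (Bᘁ)).symm x with hxh
  have h0 : xh ≫ (iᘁ) = 0 := by
    apply (tensorLeftHomEquiv T W (Wᘁ) (Aᘁ)).injective
    rw [tensorLeftHomEquiv_naturality, tensorLeftHomEquiv_zero, hxh, Equiv.apply_symm_apply, hx]
  obtain ⟨yh, hyh⟩ := mate_kernel_lift hcoker xh h0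
  refine ⟨(tensorLeftHomEquiv T W (Wᘁ) (Ccᘁ)) yh, ?_⟩
  rw [← tensorLeftHomEquiv_naturality, hyh, hxh, Equiv.apply_symm_apply]

end Dual

section Trace
variable [Abelian C] [MonoidalPreadditive C] [RigidCategory C]

noncomputable def tr {X : C} (φ : X ⟶ ((Xᘁ)ᘁ)) : 𝟙_ C ⟶ 𝟙_ C :=
  η_ X (Xᘁ) ≫ (φ ▷ (Xᘁ)) ≫ ε_ (Xᘁ) ((Xᘁ)ᘁ)

lemma tr_zero (X : C) : tr (0 : X ⟶ ((Xᘁ)ᘁ)) = 0 := by simp [tr]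

set_option maxHeartbeats 1000000 in
theorem tr_additive {A B Cc : C} (i : A ⟶ B) (p : B ⟶ Cc) [Mono i] [Epi p]
    (hw : i ≫ p = 0) (hcoker : IsColimit (CokernelCofork.ofπ p hw))
    (φA : A ⟶ ((Aᘁ)ᘁ)) (φB : B ⟶ ((Bᘁ)ᘁ)) (φC : Cc ⟶ ((Ccᘁ)ᘁ))
    (h1 : i ≫ φB = φA ≫ ((iᘁ)ᘁ)) (h2 : p ≫ φC = φB ≫ ((pᘁ)ᘁ)) :
    tr φB = tr φA + tr φC := by
  haveI : Mono (pᘁ) := mate_mono_of_epi hcoker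
  haveI : Epi (iᘁ) := mate_epi_of_mono i
  haveI : Epi (((Bᘁ)ᘁ) ◁ (iᘁ)) := whiskerLeft_epi' _ _
  haveI : Epi (((Aᘁ)ᘁ) ◁ (iᘁ)) := whiskerLeft_epi' _ _
  haveI : Mono (((Ccᘁ)ᘁ) ◁ (pᘁ)) := whiskerLeft_mono' _ _
  set q : ((Bᘁ)ᘁ) ⊗ (Bᘁ) ⟶ ((Bᘁ)ᘁ) ⊗ (Aᘁ) := ((Bᘁ)ᘁ) ◁ (iᘁ) with hq
  set g2 : ((Aᘁ)ᘁ) ⊗ (Aᘁ) ⟶ ((Bᘁ)ᘁ) ⊗ (Aᘁ) := ((iᘁ)ᘁ) ▷ (Aᘁ) with hg2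
  haveI : Epi q := inferInstanceAs (Epi (((Bᘁ)ᘁ) ◁ (iᘁ)))
  set cA : 𝟙_ C ⟶ ((Aᘁ)ᘁ) ⊗ (Aᘁ) := η_ A (Aᘁ) ≫ (φA ▷ (Aᘁ)) with hcA
  set cB : 𝟙_ C ⟶ ((Bᘁ)ᘁ) ⊗ (Bᘁ) := η_ B (Bᘁ) ≫ (φB ▷ (Bᘁ)) with hcB
  set cC : 𝟙_ C ⟶ ((Ccᘁ)ᘁ) ⊗ (Ccᘁ) := η_ Cc (Ccᘁ) ≫ (φC ▷ (Ccᘁ)) with hcC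
  have hi2p2 : ((iᘁ)ᘁ) ≫ ((pᘁ)ᘁ) = 0 := by
    rw [← comp_rightAdjointMate, mate_comp_zero hw, rightAdjointMate_zero]
  have comp1 : cB ≫ q = cA ≫ g2 := by
    rw [hcB, hq, Category.assoc, ← whisker_exchange, coevaluation_comp_rightAdjointMate_assoc,
      ← comp_whiskerRight, h1, comp_whiskerRight, hcA, hg2, Category.assoc]
  have comp2 : cB ≫ (((pᘁ)ᘁ) ▷ (Bᘁ)) = cC ≫ (((Ccᘁ)ᘁ) ◁ (pᘁ)) := by
    rw [hcB, hcC, Category.assoc, ← comp_whiskerRight, ← h2, comp_whiskerRight,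
      ← coevaluation_comp_rightAdjointMate_assoc, whisker_exchange, Category.assoc]
  have star1 : (((iᘁ)ᘁ) ▷ (Bᘁ)) ≫ ε_ (Bᘁ) ((Bᘁ)ᘁ)
      = ((((Aᘁ)ᘁ)) ◁ (iᘁ)) ≫ ε_ (Aᘁ) ((Aᘁ)ᘁ) := rightAdjointMate_comp_evaluation (iᘁ)
  have star2 : (((pᘁ)ᘁ) ▷ (Ccᘁ)) ≫ ε_ (Ccᘁ) ((Ccᘁ)ᘁ)
      = ((((Bᘁ)ᘁ)) ◁ (pᘁ)) ≫ ε_ (Bᘁ) ((Bᘁ)ᘁ) := rightAdjointMate_comp_evaluation (pᘁ)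
  set pr1 := pullback.fst q g2 with hpr1
  set pr2 := pullback.snd q g2 with hpr2
  set γ := pullback.lift cB cA comp1 with hγ
  have hγ1 : γ ≫ pr1 = cB := pullback.lift_fst _ _ _
  have hγ2 : γ ≫ pr2 = cA := pullback.lift_snd _ _ _
  have hcond : pr1 ≫ q = pr2 ≫ g2 := pullback.condition
  set ρP : pullback q g2 ⟶ ((Ccᘁ)ᘁ) ⊗ (Bᘁ) := pr1 ≫ (((pᘁ)ᘁ) ▷ (Bᘁ)) with hρP
  have hρ0 : ρP ≫ (((Ccᘁ)ᘁ) ◁ (iᘁ)) = 0 := by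
    have hz : g2 ≫ (((pᘁ)ᘁ) ▷ (Aᘁ)) = 0 := by
      rw [hg2, ← comp_whiskerRight, hi2p2, MonoidalPreadditive.zero_whiskerRight]
    rw [hρP, Category.assoc, ← whisker_exchange, ← Category.assoc, hcond,
      Category.assoc, hz, comp_zero]
  obtain ⟨ρbar, hρbar⟩ := whisker_mate_kernel_lift ((Ccᘁ)ᘁ) hcoker ρP hρ0
  set Θ : pullback q g2 ⟶ 𝟙_ C :=
    pr1 ≫ ε_ (Bᘁ) ((Bᘁ)ᘁ) - pr2 ≫ ε_ (Aᘁ) ((Aᘁ)ᘁ) with hΘ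
  set Δ : pullback q g2 ⟶ 𝟙_ C := Θ - ρbar ≫ ε_ (Ccᘁ) ((Ccᘁ)ᘁ) with hΔ
  set κ := kernel.ι pr2 with hκ
  have hκ2 : κ ≫ pr2 = 0 := kernel.condition _
  have hκq : (κ ≫ pr1) ≫ q = 0 := by
    rw [Category.assoc, hcond, ← Category.assoc, hκ2, zero_comp]
  obtain ⟨w, hwfac⟩ := whisker_mate_kernel_lift ((Bᘁ)ᘁ) hcoker (κ ≫ pr1) hκq
  have hκρ : κ ≫ ρbar = w ≫ (((pᘁ)ᘁ) ▷ (Ccᘁ)) := by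
    rw [← cancel_mono ((((Ccᘁ)ᘁ)) ◁ (pᘁ)), Category.assoc, hρbar, hρP, ← Category.assoc,
      ← hwfac]
    simp only [Category.assoc]
    rw [whisker_exchange]
  have hκΔ : κ ≫ Δ = 0 := by
    rw [hΔ, hΘ, Preadditive.comp_sub, Preadditive.comp_sub,
      ← Category.assoc κ pr2, hκ2, zero_comp, sub_zero,
      ← Category.assoc κ ρbar, hκρ, ← Category.assoc κ pr1, ← hwfac]
    simp only [Category.assoc]
    rw [star2, sub_self]
  set Δbar := Abelian.epiDesc pr2 Δ hκΔ with hΔbar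
  have hfac : pr2 ≫ Δbar = Δ := Abelian.comp_epiDesc _ _ _
  set ξ := pullback.lift (((iᘁ)ᘁ) ▷ (Bᘁ)) ((((Aᘁ)ᘁ)) ◁ (iᘁ)) (whisker_exchange _ _).symm
    with hξ
  have hξ1 : ξ ≫ pr1 = ((iᘁ)ᘁ) ▷ (Bᘁ) := pullback.lift_fst _ _ _
  have hξ2 : ξ ≫ pr2 = (((Aᘁ)ᘁ)) ◁ (iᘁ) := pullback.lift_snd _ _ _
  have hξρ : ξ ≫ ρbar = 0 := by
    rw [← cancel_mono ((((Ccᘁ)ᘁ)) ◁ (pᘁ)), Category.assoc, hρbar, hρP, ← Category.assoc, hξ1,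
      zero_comp, ← comp_whiskerRight, hi2p2, MonoidalPreadditive.zero_whiskerRight]
  have hξΔ : ξ ≫ Δ = 0 := by
    rw [hΔ, hΘ, Preadditive.comp_sub, Preadditive.comp_sub,
      ← Category.assoc ξ ρbar, hξρ, zero_comp, sub_zero,
      ← Category.assoc ξ pr1, hξ1, ← Category.assoc ξ pr2, hξ2, star1, sub_self]
  have hΔbar0 : Δbar = 0 := by
    rw [← cancel_epi ((((Aᘁ)ᘁ)) ◁ (iᘁ)), comp_zero, ← hξ2, Category.assoc, hfac, hξΔ]
  have hΔ0 : Δ = 0 := by rw [← hfac, hΔbar0, comp_zero]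
  have hγρ : γ ≫ ρbar = cC := by
    rw [← cancel_mono ((((Ccᘁ)ᘁ)) ◁ (pᘁ)), Category.assoc, hρbar, hρP, ← Category.assoc, hγ1,
      comp2]
  have hΘeq : Θ = ρbar ≫ ε_ (Ccᘁ) ((Ccᘁ)ᘁ) := by
    have h0 : Θ - ρbar ≫ ε_ (Ccᘁ) ((Ccᘁ)ᘁ) = 0 := by rw [← hΔ]; exact hΔ0
    exact sub_eq_zero.mp h0
  have key : cB ≫ ε_ (Bᘁ) ((Bᘁ)ᘁ) - cA ≫ ε_ (Aᘁ) ((Aᘁ)ᘁ) = cC ≫ ε_ (Ccᘁ) ((Ccᘁ)ᘁ) := by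
    have hkey := congrArg (fun t => γ ≫ t) hΘeq
    simp only [hΘ, Preadditive.comp_sub, ← Category.assoc, hγ1, hγ2, hγρ] at hkey
    exact hkey
  have final : tr φB - tr φA = tr φC := by
    simpa only [tr, hcB, hcA, hcC, Category.assoc] using key
  exact sub_eq_iff_eq_add'.mp final

end Trace

section Unit

lemma postcomp_bijective_isIso {M N : C} (m : M ⟶ N)
    (h : ∀ T : C, Function.Bijective (fun g : T ⟶ M => g ≫ m)) : IsIso m := by
  obtain ⟨s, hs⟩ := (h N).2 (𝟙 N)
  refine ⟨s, ?_, hs⟩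
  apply (h M).1
  simp only [Category.assoc, hs, Category.comp_id, Category.id_comp]

lemma unit_eval_isIso (Y : C) [ExactPairing (𝟙_ C) Y] : IsIso (ε_ (𝟙_ C) Y) := by
  set m : 𝟙_ C ⊗ Y ⟶ 𝟙_ C :=
    (ρ_ (𝟙_ C ⊗ Y)).inv ≫ (α_ (𝟙_ C) Y (𝟙_ C)).hom ≫ (𝟙_ C ◁ ε_ (𝟙_ C) Y) ≫ (ρ_ (𝟙_ C)).hom
    with hm
  have hb : ∀ T : C, Function.Bijective (fun g : T ⟶ 𝟙_ C ⊗ Y => g ≫ m) := by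
    intro T
    have heq : (fun g : T ⟶ 𝟙_ C ⊗ Y => g ≫ m)
        = (fun x : T ⊗ 𝟙_ C ⟶ 𝟙_ C => (ρ_ T).inv ≫ x) ∘
          (tensorRightHomEquiv T (𝟙_ C) Y (𝟙_ C)).symm := by
      funext g
      dsimp [tensorRightHomEquiv]
      rw [hm, rightUnitor_inv_naturality_assoc]
    rw [heq]
    refine Function.Bijective.comp ?_ (Equiv.bijective _)
    constructor
    · intro a b hab
      simpa using congrArg (fun t => (ρ_ T).hom ≫ t) hab
    · intro y; exact ⟨(ρ_ T).hom ≫ y, by simp⟩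
  haveI hmi : IsIso m := postcomp_bijective_isIso m hb
  have hwl : 𝟙_ C ◁ ε_ (𝟙_ C) Y
      = (α_ (𝟙_ C) Y (𝟙_ C)).inv ≫ (ρ_ (𝟙_ C ⊗ Y)).hom ≫ m ≫ (ρ_ (𝟙_ C)).inv := by
    rw [hm]; simp
  have hε : ε_ (𝟙_ C) Y = (λ_ (Y ⊗ 𝟙_ C)).inv ≫ (𝟙_ C ◁ ε_ (𝟙_ C) Y) ≫ (λ_ (𝟙_ C)).hom := by
    rw [leftUnitor_naturality]; simp
  rw [hε, hwl]
  infer_instance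

lemma unit_coeval_isIso (Y : C) [ExactPairing (𝟙_ C) Y] : IsIso (η_ (𝟙_ C) Y) := by
  haveI := unit_eval_isIso Y
  have hz : (η_ (𝟙_ C) Y ▷ 𝟙_ C) ≫ ((α_ (𝟙_ C) Y (𝟙_ C)).hom ≫ (𝟙_ C ◁ ε_ (𝟙_ C) Y))
      = (λ_ (𝟙_ C)).hom ≫ (ρ_ (𝟙_ C)).inv := by
    exact ExactPairing.evaluation_coevaluation (𝟙_ C) Y
  haveI h1 : IsIso (η_ (𝟙_ C) Y ▷ 𝟙_ C) := IsIso.of_isIso_fac_right hz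
  have h2 : η_ (𝟙_ C) Y
      = (ρ_ (𝟙_ C)).inv ≫ (η_ (𝟙_ C) Y ▷ 𝟙_ C) ≫ (ρ_ (𝟙_ C ⊗ Y)).hom := by
    rw [rightUnitor_naturality]; simp
  rw [h2]
  infer_instance

lemma eval_isIso_of_unitIso {X Y : C} [ExactPairing X Y] (h : 𝟙_ C ≅ X) :
    IsIso (ε_ X Y) ∧ IsIso (η_ X Y) := by
  letI P : ExactPairing (𝟙_ C) Y := exactPairingCongrLeft h
  have h1 : IsIso (Y ◁ h.hom ≫ ε_ X Y) := @unit_eval_isIso C _ _ Y P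
  have h2 : IsIso (η_ X Y ≫ h.inv ▷ Y) := @unit_coeval_isIso C _ _ Y P
  constructor
  · exact @IsIso.of_isIso_comp_left C _ _ _ _ (Y ◁ h.hom) (ε_ X Y) _ h1
  · exact @IsIso.of_isIso_comp_right C _ _ _ _ (η_ X Y) (h.inv ▷ Y) _ h2

end Unit

section Main
variable [Abelian C] [MonoidalPreadditive C] [RigidCategory C]

lemma tr_isIso_of_unit {X : C} (h : 𝟙_ C ≅ X) (φ : X ⟶ ((Xᘁ)ᘁ)) [IsIso φ] :
    IsIso (tr φ) := by
  obtain ⟨hε, hη⟩ := eval_isIso_of_unitIso (Y := (Xᘁ)) h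
  haveI := hε; haveI := hη
  haveI : IsIso ((ρ_ (Xᘁ)).inv ≫ ((Xᘁ) ◁ h.hom) ≫ ε_ X (Xᘁ)) := by infer_instance
  obtain ⟨hε2, -⟩ := eval_isIso_of_unitIso (X := (Xᘁ)) (Y := ((Xᘁ)ᘁ))
      (asIso ((ρ_ (Xᘁ)).inv ≫ ((Xᘁ) ◁ h.hom) ≫ ε_ X (Xᘁ))).symm
  haveI := hε2
  unfold tr
  infer_instance

lemma projective_tensor (W X : C) [Projective W] : Projective (W ⊗ X) := by
  haveI : (tensorRight (Xᘁ)).PreservesEpimorphisms := by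
    constructor
    intro A B f hf
    haveI := hf
    simpa using whiskerRight_epi' (Xᘁ) f
  exact (tensorRightAdjunction X (Xᘁ)).map_projective W ‹Projective W›

lemma projective_of_retract {M X : C} [Projective M] (s : X ⟶ M) (r : M ⟶ X)
    (hsr : s ≫ r = 𝟙 X) : Projective X where
  factors {E Z} f e he := by
    refine ⟨s ≫ Projective.factorThru (r ≫ f) e, ?_⟩
    rw [Category.assoc, Projective.factorThru_comp, ← Category.assoc, hsr, Category.id_comp]

lemma all_projective_of_unit [Projective (𝟙_ C)] (X : C) : Projective X := by
  haveI := projective_tensor (𝟙_ C) X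
  exact Projective.of_iso (λ_ X) inferInstance

lemma epi_to_zero (Y : C) : Epi (0 : Y ⟶ (0 : C)) :=
  ⟨fun g h _ => (Limits.isZero_zero C).eq_of_src g h⟩

noncomputable def zero_cokernel_of_epi {X Y : C} (f : X ⟶ Y) [Epi f] :
    IsColimit (CokernelCofork.ofπ (0 : Y ⟶ (0 : C)) (comp_zero (f := f))) := by
  refine CokernelCofork.IsColimit.ofπ _ _ (fun {Z'} k hk => 0) (fun {Z'} k hk => ?_)
    (fun {Z'} k hk m hm => (Limits.isZero_zero C).eq_of_src m _)
  rw [zero_comp]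
  symm
  rw [← cancel_epi f, hk, comp_zero]

lemma shortExact_of_mono {A B : C} (i : A ⟶ B) [Mono i] :
    (ShortComplex.mk i (cokernel.π i) (cokernel.condition i)).ShortExact :=
  ⟨ShortComplex.exact_of_g_is_cokernel _ (cokernelIsCokernel i)⟩

lemma shortExact_iso_zero {X Y : C} (e : X ≅ Y) :
    (ShortComplex.mk e.hom (0 : Y ⟶ (0 : C)) comp_zero).ShortExact := by
  haveI := epi_to_zero (C := C) Y
  exact ⟨(ShortComplex.exact_iff_epi _ rfl).mpr inferInstance⟩

lemma shortExact_of_isZero {X : C} (h : IsZero X) :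
    (ShortComplex.mk (𝟙 X) (𝟙 X) (h.eq_of_src _ _)).ShortExact :=
  ⟨ShortComplex.exact_of_isZero_X₂ _ h⟩

end Main

end CartanAux


open CartanAux

set_option maxHeartbeats 1600000 in
/-- **Categorical Lorenz theorem.** -/
theorem cartan_matrix_degenerate {k : Type u} {C : Type v} [Field k] [IsAlgClosed k]
    [Category.{w} C] [Abelian C] [CategoryTheory.Linear k C] [MonoidalCategory C]
    [MonoidalPreadditive C] [MonoidalLinear k C] [RigidCategory C]
    [FiniteTensorCategory k C]
    {ι : Type} [Fintype ι] [DecidableEq ι]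
    (L : ι → C) (hL : ∀ i, Simple (L i))
    (hLall : ∀ X : C, Simple X → ∃ i, Nonempty (X ≅ L i))
    (hLdist : ∀ i j, Nonempty (L i ≅ L j) → i = j)
    (P : ι → C)
    (hP : ∀ i, Projective (P i) ∧ ∃ f : P i ⟶ L i, Epi f ∧
      ∀ (R : C) (g : R ⟶ P i), Epi (g ≫ f) → Epi g)
    -- Jordan–Hölder multiplicities
    (μ : C → ι → ℕ)
    (hμL : ∀ i j, μ (L i) j = if i = j then 1 else 0)
    (hμadd : ∀ S : ShortComplex C, S.ShortExact → ∀ j, μ S.X₂ j = μ S.X₁ j + μ S.X₃ j)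
    -- `C` is not semisimple
    (hnss : ¬ ∀ X : C, Projective X)
    -- an isomorphism of additive functors `Id ≅ (−)ᘁᘁ`
    (u : ∀ X : C, X ≅ (Xᘁ)ᘁ)
    (hu : ∀ {X Y : C} (f : X ⟶ Y), f ≫ (u Y).hom = (u X).hom ≫ ((fᘁ)ᘁ)) :
    Matrix.det (Matrix.of fun i j : ι => ((μ (P i) j : ℕ) : k)) = 0 := by
  classical
  haveI hFD : ∀ X Y : C, FiniteDimensional k (X ⟶ Y) := FiniteTensorCategory.homFinite
  haveI hSimple1 : Simple (𝟙_ C) := FiniteTensorCategory.simpleUnit (k := k)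
  haveI : FiniteDimensional k (𝟙_ C ⟶ 𝟙_ C) := hFD _ _
  -- the unit object is not projective
  have hunit : ¬ Projective (𝟙_ C) := by
    intro hPu
    exact hnss fun X => all_projective_of_unit X
  -- trace of `u` vanishes on projectives
  have htrP : ∀ (X : C), Projective X → tr ((u X).hom) = 0 := by
    intro X hX
    by_contra hne
    obtain ⟨c, hc⟩ := endomorphism_simple_eq_smul_id (𝕜 := k) (tr (u X).hom)
    have hc0 : c ≠ 0 := fun h => hne (by rw [← hc, h, zero_smul])
    apply hunit
    haveI := hX
    haveI : Projective ((Xᘁ)ᘁ) := Projective.of_iso (u X) hX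
    haveI : Projective (((Xᘁ)ᘁ) ⊗ (Xᘁ)) := projective_tensor _ _
    refine projective_of_retract (M := ((Xᘁ)ᘁ) ⊗ (Xᘁ))
      (η_ X (Xᘁ) ≫ ((u X).hom ▷ (Xᘁ)))
      (ε_ (Xᘁ) ((Xᘁ)ᘁ) ≫ (c⁻¹ • 𝟙 (𝟙_ C))) ?_
    have hts : (η_ X (Xᘁ) ≫ ((u X).hom ▷ (Xᘁ))) ≫ ε_ (Xᘁ) ((Xᘁ)ᘁ)
        = tr (u X).hom := Category.assoc _ _ _
    rw [← Category.assoc, hts, ← hc]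
    simp [Linear.smul_comp, Linear.comp_smul, smul_smul, mul_inv_cancel₀ hc0,
      inv_mul_cancel₀ hc0]
  -- basic facts about μ
  have hμzero : ∀ (Z : C), IsZero Z → ∀ j, μ Z j = 0 := by
    intro Z hZ j
    have h := hμadd _ (shortExact_of_isZero hZ) j
    dsimp at h
    omega
  have hμiso : ∀ {X Y : C} (e : X ≅ Y) (j : ι), μ X j = μ Y j := by
    intro X Y e j
    have h := hμadd _ (shortExact_iso_zero e) j
    have h0 := hμzero _ (isZero_zero C) j
    dsimp at h
    omega
  -- basic facts about tr ∘ u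
  have htr0 : ∀ (Z : C), IsZero Z → tr (u Z).hom = 0 := by
    intro Z hZ
    have h : (u Z).hom = 0 := hZ.eq_of_src _ _
    rw [h, tr_zero]
  have htriso : ∀ {X Y : C} (e : X ≅ Y), tr (u X).hom = tr (u Y).hom := by
    intro X Y e
    haveI := epi_to_zero (C := C) Y
    have h := tr_additive e.hom (0 : Y ⟶ (0 : C)) comp_zero
      (zero_cokernel_of_epi e.hom) (u X).hom (u Y).hom (u (0 : C)).hom
      (hu e.hom) (hu 0)
    rw [htr0 _ (isZero_zero C), add_zero] at h
    exact h.symm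
  -- the key induction: tr (u X) = ∑ μ X j • tr (u (L j))
  have main : ∀ (n : ℕ) (X : C), (∑ j, μ X j) = n →
      tr (u X).hom = ∑ j, (μ X j) • tr (u (L j)).hom := by
    intro n
    induction n using Nat.strong_induction_on with
    | _ n IH =>
      intro X hn
      by_cases hz : IsZero X
      · rw [htr0 _ hz]
        symm
        apply Finset.sum_eq_zero
        intro j _
        rw [hμzero _ hz, zero_smul]
      · haveI : IsArtinianObject X := by
            rw [IsArtinianObject, ObjectProperty.is_iff]; exact (FiniteTensorCategory.finiteLength (k := k) X).2
        obtain ⟨S, hS⟩ := exists_simple_subobject (X := X) hz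
        have hSE := shortExact_of_mono (S.arrow)
        have hadd := hμadd _ hSE
        obtain ⟨j0, ⟨e⟩⟩ := hLall (S : C) hS
        have hμS : ∀ j, μ (S : C) j = if j0 = j then 1 else 0 := by
          intro j; rw [hμiso e j, hμL j0 j]
        have htrS : tr (u (S : C)).hom = tr (u (L j0)).hom := htriso e
        haveI : Mono S.arrow := inferInstance
        have htradd := tr_additive (S.arrow) (cokernel.π S.arrow)
          (cokernel.condition _) hSE.gIsCokernel (u (S : C)).hom (u X).hom
          (u (cokernel S.arrow)).hom (hu _) (hu _)
        have hcnt : ∀ j, μ X j = μ (S : C) j + μ (cokernel S.arrow) j := fun j => hadd j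
        have hnS : (∑ j, μ (S : C) j) = 1 := by
          simp [hμS]
        have hnQ : (∑ j, μ (cokernel S.arrow) j) < n := by
          have hsum : (∑ j, μ X j)
              = (∑ j, μ (S : C) j) + (∑ j, μ (cokernel S.arrow) j) := by
            rw [← Finset.sum_add_distrib]
            exact Finset.sum_congr rfl (fun j _ => hcnt j)
          omega
        have hQsum := IH _ hnQ (cokernel S.arrow) rfl
        rw [htradd, htrS, hQsum]
        have hsplit : (∑ j, μ X j • tr (u (L j)).hom)
            = (∑ j, (if j0 = j then 1 else 0) • tr (u (L j)).hom)
              + ∑ j, μ (cokernel S.arrow) j • tr (u (L j)).hom := by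
          rw [← Finset.sum_add_distrib]
          apply Finset.sum_congr rfl
          intro j _
          rw [hcnt j, hμS j, add_nsmul]
        rw [hsplit]
        congr 1
        simp [ite_smul]
  -- scalars d j with tr (u (L j)) = d j • 𝟙
  have hdex : ∀ j, ∃ c : k, c • 𝟙 (𝟙_ C) = tr (u (L j)).hom := fun j =>
    endomorphism_simple_eq_smul_id k _
  choose d hd using hdex
  have hrow : ∀ i0 : ι, (∑ j, ((μ (P i0) j : k) * d j)) = 0 := by
    intro i0
    have h1 : tr (u (P i0)).hom = 0 := htrP _ (hP i0).1
    have h2 := main _ (P i0) rfl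
    rw [h1] at h2
    have h3 : (∑ j, ((μ (P i0) j : k) * d j)) • 𝟙 (𝟙_ C) = 0 := by
      have hterm : ∀ j ∈ Finset.univ, ((μ (P i0) j : k) * d j) • 𝟙 (𝟙_ C)
          = μ (P i0) j • tr (u (L j)).hom := by
        intro j _
        rw [mul_smul, hd j, Nat.cast_smul_eq_nsmul]
      rw [Finset.sum_smul, Finset.sum_congr rfl hterm, ← h2]
    rcases smul_eq_zero.mp h3 with h | h
    · exact h
    · exact absurd h (id_nonzero _)
  have hd0 : d ≠ 0 := by
    obtain ⟨i1, ⟨e1⟩⟩ := hLall (𝟙_ C) hSimple1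
    haveI hIso : IsIso (tr (u (L i1)).hom) := tr_isIso_of_unit e1 _
    intro hdz
    have ht1 : tr (u (L i1)).hom = 0 := by
      rw [← hd i1, show d i1 = 0 from congrFun hdz i1, zero_smul]
    have hcontr : (𝟙 (𝟙_ C)) = 0 := by
      calc 𝟙 (𝟙_ C) = tr (u (L i1)).hom ≫ inv (tr (u (L i1)).hom) :=
            (IsIso.hom_inv_id _).symm
        _ = 0 ≫ inv (tr (u (L i1)).hom) :=
            congrArg (fun t => t ≫ inv (tr (u (L i1)).hom)) ht1
        _ = 0 := zero_comp
    exact id_nonzero _ hcontr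
  rw [← Matrix.exists_mulVec_eq_zero_iff]
  refine ⟨d, hd0, ?_⟩
  funext i0
  simpa [Matrix.mulVec, dotProduct] using hrow i0
end
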